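/- arXiv:2101.04714 — 5 statements merged into one kernel-verified Lean document; each statement's English description precedes it below -/
import Mathlib

section
/- For n > k > r, the number of plane trees on n edges with k leaves and root degree r equals (r/n)*C(n,k)*C(n-r-1, n-k-1); and for n = k = r it equals 1. -/
inductive PlaneTree : Type
  | node : List PlaneTree → PlaneTree

namespace PlaneTree

def edges : PlaneTree → ℕ
  | node ts => (ts.attach.map (fun t => edges t.1)).sum + ts.length
decreasing_by have := List.sizeOf_lt_of_mem t.2; simp [PlaneTree.node.sizeOf_spec]; omega

def leafAux : PlaneTree → ℕ
  | node ts => (if ts.length = 0 then 1 else 0) + (ts.attach.map (fun t => leafAux t.1)).sum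
decreasing_by have := List.sizeOf_lt_of_mem t.2; simp [PlaneTree.node.sizeOf_spec]; omega

def internalAux : PlaneTree → ℕ
  | node ts => (if ts.length = 1 then 1 else 0) + (ts.attach.map (fun t => internalAux t.1)).sum
decreasing_by have := List.sizeOf_lt_of_mem t.2; simp [PlaneTree.node.sizeOf_spec]; omega

/-- number of leaves: non-root vertices of down degree 0 -/
def leaves : PlaneTree → ℕ
  | node ts => (ts.map leafAux).sum

/-- number of internal nodes: non-root vertices of down degree 1 -/
def internals : PlaneTree → ℕ
  | node ts => (ts.map internalAux).sum

def rootDegree : PlaneTree → ℕ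
  | node ts => ts.length

end PlaneTree

namespace PlaneTree

def code : PlaneTree → List ℕ
  | node ts => ts.length :: (ts.attach.map (fun t => code t.1)).flatten
decreasing_by have := List.sizeOf_lt_of_mem t.2; simp [PlaneTree.node.sizeOf_spec]; omega

lemma edges_node (ts : List PlaneTree) : (node ts).edges = (ts.map edges).sum + ts.length := by
  rw [edges]
  congr 1
  rw [← List.attach_map_val (l := ts) (f := edges)]

lemma leafAux_node (ts : List PlaneTree) :
    (node ts).leafAux = (if ts.length = 0 then 1 else 0) + (ts.map leafAux).sum := by
  rw [leafAux]
  congr 1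
  rw [← List.attach_map_val (l := ts) (f := leafAux)]

def forestCode (ts : List PlaneTree) : List ℕ := (ts.map code).flatten

lemma code_node (ts : List PlaneTree) : code (node ts) = ts.length :: forestCode ts := by
  rw [code, forestCode]
  congr 1
  rw [← List.attach_map_val (l := ts) (f := code)]

lemma forestCode_cons (cs ts : List PlaneTree) :
    forestCode (node cs :: ts) = cs.length :: forestCode (cs ++ ts) := by
  simp only [forestCode, List.map_cons, List.flatten_cons, List.map_append, List.flatten_append,
    code_node, forestCode]
  simp

lemma sizeOf_cons_lt : ∀ (cs ts : List PlaneTree), sizeOf (cs ++ ts) < sizeOf (node cs :: ts) := by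
  intro cs
  induction cs with
  | nil =>
    intro ts
    simp only [List.nil_append, List.cons.sizeOf_spec, PlaneTree.node.sizeOf_spec]
    omega
  | cons c cs' ih =>
    intro ts
    have h1 := ih ts
    simp only [List.cons_append, List.cons.sizeOf_spec, PlaneTree.node.sizeOf_spec] at h1 ⊢
    omega

lemma forest_ind (P : List PlaneTree → Prop) (h0 : P [])
    (h1 : ∀ cs ts, P (cs ++ ts) → P (node cs :: ts)) : ∀ ts, P ts := by
  have key : ∀ n (ts : List PlaneTree), sizeOf ts ≤ n → P ts := by
    intro n
    induction n with
    | zero =>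
      intro ts h
      cases ts with
      | nil => exact h0
      | cons t ts' =>
        exfalso
        simp only [List.cons.sizeOf_spec] at h
        omega
    | succ n ih =>
      intro ts h
      cases ts with
      | nil => exact h0
      | cons t ts' =>
        cases t with
        | node cs =>
          apply h1
          apply ih
          have := sizeOf_cons_lt cs ts'
          omega
  exact fun ts => key (sizeOf ts) ts le_rfl

lemma length_forestCode : ∀ ts : List PlaneTree,
    (forestCode ts).length = (ts.map edges).sum + ts.length := by
  apply forest_ind
  · simp [forestCode]
  · intro cs ts ih
    rw [forestCode_cons]
    simp only [List.length_cons, ih, List.map_append, List.sum_append, List.length_append,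
      List.map_cons, List.sum_cons, edges_node]
    omega

lemma sum_forestCode : ∀ ts : List PlaneTree, (forestCode ts).sum = (ts.map edges).sum := by
  apply forest_ind
  · simp [forestCode]
  · intro cs ts ih
    rw [forestCode_cons]
    simp only [List.sum_cons, ih, List.map_append, List.sum_append,
      List.map_cons, edges_node]
    omega

lemma count_forestCode : ∀ ts : List PlaneTree,
    (forestCode ts).count 0 = (ts.map leafAux).sum := by
  apply forest_ind
  · simp [forestCode]
  · intro cs ts ih
    rw [forestCode_cons]
    rw [List.count_cons]
    simp only [ih, List.map_append, List.sum_append, List.map_cons, List.sum_cons, leafAux_node]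
    by_cases h : cs.length = 0 <;> simp [h] <;> omega

lemma good_forestCode : ∀ ts : List PlaneTree,
    ∀ i < (forestCode ts).length, i < ((forestCode ts).take i).sum + ts.length := by
  apply forest_ind
  · simp [forestCode]
  · intro cs ts ih
    rw [forestCode_cons]
    intro i hi
    match i with
    | 0 => simp
    | j + 1 =>
      rw [List.take_succ_cons, List.sum_cons]
      simp only [List.length_cons] at hi
      have h2 := ih j (by omega)
      simp only [List.length_append] at h2
      simp only [List.length_cons]
      omega

lemma forestCode_inj : ∀ ts us : List PlaneTree, forestCode ts = forestCode us → ts = us := by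
  apply forest_ind (P := fun ts => ∀ us, forestCode ts = forestCode us → ts = us)
  · intro us h
    cases us with
    | nil => rfl
    | cons u us' =>
      cases u with
      | node cs' => rw [forestCode_cons] at h; simp [forestCode] at h
  · intro cs ts ih us h
    cases us with
    | nil => rw [forestCode_cons] at h; simp [forestCode] at h
    | cons u us' =>
      cases u with
      | node cs' =>
        rw [forestCode_cons, forestCode_cons] at h
        have h1 : cs.length = cs'.length := by injection h
        have h2 : forestCode (cs ++ ts) = forestCode (cs' ++ us') := by injection h
        have h3 := ih _ h2
        obtain ⟨rfl, rfl⟩ := List.append_inj h3 h1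
        rfl

lemma forestCode_surj : ∀ (w : List ℕ) (r : ℕ), w.length = w.sum + r →
    (∀ i < w.length, i < (w.take i).sum + r) →
    ∃ ts : List PlaneTree, ts.length = r ∧ forestCode ts = w := by
  intro w
  induction w with
  | nil =>
    intro r h _
    exact ⟨[], by simp at h ⊢; omega, rfl⟩
  | cons d w' ih =>
    intro r hlen hg
    have hr : 1 ≤ r := by
      have := hg 0 (by simp)
      simp at this; omega
    have hlen' : w'.length = w'.sum + (r - 1 + d) := by
      simp only [List.length_cons, List.sum_cons] at hlen
      omega
    have hg' : ∀ i < w'.length, i < (w'.take i).sum + (r - 1 + d) := by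
      intro i hi
      have h2 := hg (i+1) (by simp; omega)
      rw [List.take_succ_cons, List.sum_cons] at h2
      omega
    obtain ⟨ts', hlen2, hcode⟩ := ih (r - 1 + d) hlen' hg'
    refine ⟨node (ts'.take d) :: ts'.drop d, ?_, ?_⟩
    · simp only [List.length_cons, List.length_drop]
      omega
    · rw [forestCode_cons, List.take_append_drop, hcode]
      congr 1
      rw [List.length_take]
      omega

end PlaneTree


namespace PTCount

def Wset (n s k : ℕ) : Set (List ℕ) := {w | w.length = n ∧ w.sum = s ∧ w.count 0 = k}

def Nset (n s k : ℕ) : Set (List ℕ) := {w | w ∈ Wset n s k ∧ ∃ a t, w = (a+1) :: t}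

def succHead : List ℕ → List ℕ
  | [] => []
  | a :: t => (a+1) :: t

lemma mem_Wset {w : List ℕ} {n s k : ℕ} :
    w ∈ Wset n s k ↔ w.length = n ∧ w.sum = s ∧ w.count 0 = k := Iff.rfl

lemma elem_le_sum : ∀ {w : List ℕ} {x : ℕ}, x ∈ w → x ≤ w.sum := by
  intro w
  induction w with
  | nil => simp
  | cons a t ih =>
    intro x hx
    rcases List.mem_cons.1 hx with h | h
    · simp [h]
    · have := ih h; simp; omega

lemma finite_sized (n s : ℕ) : {w : List ℕ | w.length = n ∧ w.sum = s}.Finite := by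
  apply Set.Finite.subset (Set.Finite.image (fun l : List (Fin (s+1)) => l.map Fin.val)
    (List.finite_length_eq (Fin (s+1)) n))
  intro w hw
  refine ⟨w.map (fun x => (⟨min x s, by omega⟩ : Fin (s+1))), by simp [hw.1], ?_⟩
  show (w.map _).map _ = w
  rw [List.map_map]
  conv_rhs => rw [← List.map_id w]
  apply List.map_congr_left
  intro x hx
  have : x ≤ s := hw.2 ▸ elem_le_sum hx
  simp [Nat.min_eq_left this]

lemma finite_W (n s k : ℕ) : (Wset n s k).Finite :=
  (finite_sized n s).subset (fun _ hw => ⟨hw.1, hw.2.1⟩)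

lemma finite_N (n s k : ℕ) : (Nset n s k).Finite :=
  (finite_W n s k).subset (fun _ hw => hw.1)

lemma W_zero_eq (n : ℕ) : Wset n 0 n = {List.replicate n 0} := by
  ext w
  simp only [mem_Wset, Set.mem_singleton_iff]
  constructor
  · rintro ⟨h1, h2, _⟩
    have : ∀ x ∈ w, x = 0 := by
      intro x hx; have := elem_le_sum hx; omega
    exact List.eq_replicate_iff.2 ⟨h1, this⟩
  · rintro rfl; simp

lemma W_zero_ne {n k : ℕ} (h : k ≠ n) : Wset n 0 k = ∅ := by
  ext w
  simp only [mem_Wset, Set.mem_empty_iff_false, iff_false]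
  rintro ⟨h1, h2, h3⟩
  apply h
  have : ∀ x ∈ w, x = 0 := by intro x hx; have := elem_le_sum hx; omega
  have : w.count 0 = w.length := by
    rw [List.count_eq_length]
    intro b hb; exact (this b hb).symm
  omega

lemma W_full {n s : ℕ} (hs : 1 ≤ s) : Wset n s n = ∅ := by
  ext w
  simp only [mem_Wset, Set.mem_empty_iff_false, iff_false]
  rintro ⟨h1, h2, h3⟩
  have hall : ∀ b ∈ w, 0 = b := List.count_eq_length.1 (by omega)
  have : w.sum = 0 := by
    apply List.sum_eq_zero; intro x hx; exact (hall x hx).symm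
  omega

lemma N_zero (n k : ℕ) : Nset n 0 k = ∅ := by
  ext w
  simp only [Nset, Set.mem_setOf_eq, Set.mem_empty_iff_false, iff_false]
  rintro ⟨⟨h1, h2, h3⟩, a, t, rfl⟩
  simp at h2

lemma W_decomp (n s k : ℕ) :
    Wset (n+1) s (k+1) = (List.cons 0 '' Wset n s k) ∪ Nset (n+1) s (k+1) := by
  ext w
  constructor
  · rintro ⟨h1, h2, h3⟩
    match w with
    | [] => simp at h1
    | 0 :: t =>
      left
      exact ⟨t, ⟨by simpa using h1, by simpa using h2, by simpa using h3⟩, rfl⟩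
    | (a+1) :: t =>
      right
      exact ⟨⟨h1, h2, h3⟩, a, t, rfl⟩
  · rintro (⟨t, ⟨h1, h2, h3⟩, rfl⟩ | ⟨hw, _⟩)
    · exact ⟨by simpa using h1, by simpa using h2, by simpa using h3⟩
    · exact hw

lemma W_k0 (n s : ℕ) : Wset (n+1) s 0 = Nset (n+1) s 0 := by
  ext w
  constructor
  · rintro ⟨h1, h2, h3⟩
    refine ⟨⟨h1, h2, h3⟩, ?_⟩
    match w with
    | [] => simp at h1
    | 0 :: t => simp at h3
    | (a+1) :: t => exact ⟨a, t, rfl⟩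
  · rintro ⟨hw, _⟩; exact hw

lemma N_decomp (n s k : ℕ) :
    Nset (n+1) (s+1) k = succHead '' ((List.cons 0 '' Wset n s k) ∪ Nset (n+1) s k) := by
  ext w
  constructor
  · rintro ⟨⟨h1, h2, h3⟩, a, t, rfl⟩
    match a with
    | 0 =>
      refine ⟨0 :: t, Or.inl ⟨t, ⟨?_, ?_, ?_⟩, rfl⟩, rfl⟩
      · simpa using h1
      · simp at h2 ⊢; omega
      · simpa using h3
    | b+1 =>
      refine ⟨(b+1) :: t, Or.inr ⟨⟨?_, ?_, ?_⟩, b, t, rfl⟩, rfl⟩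
      · simpa using h1
      · simp at h2 ⊢; omega
      · simpa using h3
  · rintro ⟨v, (⟨t, ⟨h1, h2, h3⟩, rfl⟩ | ⟨⟨h1, h2, h3⟩, a, t, rfl⟩), rfl⟩
    · refine ⟨⟨by simp [succHead]; omega, ?_, by simpa [succHead] using h3⟩, 0, t, rfl⟩
      simp [succHead] at h2 ⊢; omega
    · refine ⟨⟨by simp [succHead]; simp at h1; omega, ?_, ?_⟩, a+1, t, rfl⟩
      · simp [succHead] at h2 ⊢; omega
      · simpa [succHead] using h3

lemma disj_WN (n s k m j : ℕ) : Disjoint (List.cons 0 '' Wset n s k) (Nset m s j) := by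
  rw [Set.disjoint_left]
  rintro w ⟨t, _, rfl⟩ ⟨_, a, u, h⟩
  simp at h

lemma cons_inj : Function.Injective (List.cons (0:ℕ)) := by
  intro a b h; injection h

lemma succHead_injOn (S : Set (List ℕ)) (hS : ∀ w ∈ S, w ≠ []) : Set.InjOn succHead S := by
  intro v hv u hu h
  match v, u with
  | [], _ => exact absurd rfl (hS _ hv)
  | _, [] => exact absurd rfl (hS _ hu)
  | a :: t, b :: r => simp [succHead] at h; simp [h.1, h.2]

end PTCount

namespace PTCount

lemma union_ne_nil (n s k m j : ℕ) :
    ∀ w ∈ (List.cons 0 '' Wset n s k) ∪ Nset m s j, w ≠ [] := by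
  rintro w (⟨t, _, rfl⟩ | ⟨_, a, t, rfl⟩) <;> simp

lemma ncard_N_succ (n s k m j : ℕ) :
    (succHead '' ((List.cons 0 '' Wset n s k) ∪ Nset m s j)).ncard =
      (Wset n s k).ncard + (Nset m s j).ncard := by
  rw [Set.ncard_image_of_injOn (succHead_injOn _ (union_ne_nil n s k m j)),
    Set.ncard_union_eq (disj_WN n s k m j) ((finite_W n s k).image _) (finite_N m s j),
    Set.ncard_image_of_injective _ cons_inj]

lemma card_W : ∀ m k s, k ≤ m →
    (Wset (m+1) (s+1) k).ncard = Nat.choose (m+1) k * Nat.choose s (m-k) := by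
  intro m
  induction m using Nat.strong_induction_on with
  | _ m IH =>
  have hN : ∀ s k, k ≤ m → (Nset (m+1) (s+1) k).ncard = Nat.choose m k * Nat.choose s (m-k) := by
    intro s
    induction s with
    | zero =>
      intro k hk
      rw [N_decomp, ncard_N_succ, N_zero, Set.ncard_empty]
      rcases eq_or_lt_of_le hk with rfl | hlt
      · rw [W_zero_eq, Set.ncard_singleton]
        simp
      · rw [W_zero_ne (by omega), Set.ncard_empty]
        have h0 : Nat.choose 0 (m-k) = 0 := Nat.choose_eq_zero_of_lt (by omega)
        simp [h0]
    | succ s ih =>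
      intro k hk
      rw [N_decomp, ncard_N_succ, ih k hk]
      rcases eq_or_lt_of_le hk with rfl | hlt
      · rw [W_full (by omega), Set.ncard_empty]
        simp
      · obtain ⟨m', rfl⟩ : ∃ m', m = m' + 1 := ⟨m - 1, by omega⟩
        rw [IH m' (by omega) k s (by omega)]
        have h1 : m' + 1 - k = (m' - k) + 1 := by omega
        rw [h1, Nat.choose_succ_succ, Nat.mul_add]
  intro k s hk
  match k with
  | 0 =>
    rw [W_k0, hN s 0 (by omega)]
    simp
  | j + 1 =>
    rw [W_decomp, Set.ncard_union_eq (disj_WN _ _ _ _ _) ((finite_W _ _ _).image _)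
      (finite_N _ _ _), Set.ncard_image_of_injective _ cons_inj, hN s (j+1) hk]
    obtain ⟨m', rfl⟩ : ∃ m', m = m' + 1 := ⟨m - 1, by omega⟩
    rw [IH m' (by omega) j s (by omega)]
    have h2 : m' + 1 - (j+1) = m' - j := by omega
    rw [h2, Nat.choose_succ_succ (m'+1) j, Nat.add_mul]

end PTCount


namespace PTCount

def Good (r : ℕ) (w : List ℕ) : Prop := ∀ i < w.length, i < (w.take i).sum + r

instance (r : ℕ) : DecidablePred (Good r) := fun w => by
  unfold Good; infer_instance

lemma sum_take_append_ge (x z : List ℕ) (j : ℕ) :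
    ((x ++ z).take (x.length + j)).sum = x.sum + (z.take j).sum := by
  rw [List.take_append, List.take_of_length_le (by omega), List.sum_append,
    Nat.add_sub_cancel_left]

lemma sum_take_prefix (x z : List ℕ) {i : ℕ} (h : i ≤ x.length) :
    ((x ++ z).take i).sum = (x.take i).sum := by
  rw [List.take_append_of_le_length h]

lemma good_swap (x y : List ℕ) (a r : ℕ)
    (hsum : (x ++ (a+1) :: 0 :: y).sum + r = (x ++ (a+1) :: 0 :: y).length) :
    (Good r (x ++ (a+1) :: 0 :: y) ↔ Good r (x ++ a :: y)) := by
  have hlen : (x ++ (a+1) :: 0 :: y).length = x.length + 2 + y.length := by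
    simp; omega
  have hlen2 : (x ++ a :: y).length = x.length + 1 + y.length := by
    simp; omega
  have htot : x.sum + a + 1 + y.sum + r = x.length + 2 + y.length := by
    rw [hlen] at hsum
    simp [List.sum_append] at hsum
    omega
  have hsL : ∀ j, ((x ++ (a+1) :: 0 :: y).take (x.length + (j+2))).sum
      = x.sum + a + 1 + (y.take j).sum := by
    intro j
    rw [sum_take_append_ge, List.take_succ_cons, List.take_succ_cons,
      List.sum_cons, List.sum_cons]
    omega
  have hsL1 : ((x ++ (a+1) :: 0 :: y).take (x.length + 1)).sum = x.sum + a + 1 := by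
    rw [show x.length + 1 = x.length + (0+1) from rfl, sum_take_append_ge,
      List.take_succ_cons, List.take_zero, List.sum_cons, List.sum_nil]
    omega
  have hsR : ∀ j, ((x ++ a :: y).take (x.length + (j+1))).sum
      = x.sum + a + (y.take j).sum := by
    intro j
    rw [sum_take_append_ge, List.take_succ_cons, List.sum_cons]
    omega
  constructor
  · intro hG i hi
    rw [hlen2] at hi
    rcases Nat.lt_or_ge i (x.length + 1) with h | h
    · have h' : i ≤ x.length := by omega
      rw [sum_take_prefix _ _ h']
      have h2 := hG i (by omega)
      rw [sum_take_prefix _ _ h'] at h2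
      exact h2
    · obtain ⟨j, rfl⟩ : ∃ j, i = x.length + (j+1) := ⟨i - x.length - 1, by omega⟩
      rw [hsR]
      have h2 := hG (x.length + (j+2)) (by rw [hlen]; omega)
      rw [hsL] at h2
      omega
  · intro hG i hi
    rw [hlen] at hi
    rcases Nat.lt_or_ge i (x.length + 1) with h | h
    · have h' : i ≤ x.length := by omega
      rw [sum_take_prefix _ _ h']
      have h2 := hG i (by rw [hlen2]; omega)
      rw [sum_take_prefix _ _ h'] at h2
      exact h2
    · rcases Nat.eq_or_lt_of_le h with h1 | h1
      · rw [← h1, hsL1]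
        rcases Nat.eq_zero_or_pos y.length with hy | hy
        · have : y = [] := List.length_eq_zero_iff.1 hy
          subst this
          simp at htot
          omega
        · have h2 := hG (x.length + (0+1)) (by rw [hlen2]; omega)
          rw [hsR] at h2
          simp at h2
          omega
      · obtain ⟨j, rfl⟩ : ∃ j, i = x.length + (j+2) := ⟨i - x.length - 2, by omega⟩
        rw [hsL]
        have h2 := hG (x.length + (j+1)) (by rw [hlen2]; omega)
        rw [hsR] at h2
        omega

open Finset in
lemma count_rot_one (w : List ℕ) (hw : w ≠ []) (P : List ℕ → Prop) [DecidablePred P] :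
    ((range w.length).filter (fun i => P ((w.rotate 1).rotate i))).card =
    ((range w.length).filter (fun i => P (w.rotate i))).card := by
  set n := w.length with hn
  have hn1 : 1 ≤ n := List.length_pos_iff.2 hw
  have key : ∀ i < n, (w.rotate 1).rotate i = w.rotate (if i + 1 = n then 0 else i + 1) := by
    intro i hi
    rw [List.rotate_rotate]
    split
    · next h => rw [show 1 + i = n by omega, List.rotate_zero, hn, List.rotate_length]
    · next h => rw [Nat.add_comm 1 i]
  have key2 : ∀ j < n, w.rotate j = w.rotate (1 + (if j = 0 then n - 1 else j - 1)) := by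
    intro j hj
    split
    · next h => rw [h, show 1 + (n-1) = n by omega, List.rotate_zero, hn, List.rotate_length]
    · next h => rw [show 1 + (j-1) = j by omega]
  apply Finset.card_bij' (fun i _ => if i + 1 = n then 0 else i + 1)
    (fun j _ => if j = 0 then n - 1 else j - 1)
  · intro i hi
    simp only [Finset.mem_filter, Finset.mem_range] at hi ⊢
    refine ⟨by split <;> omega, ?_⟩
    rw [← key i hi.1]
    exact hi.2
  · intro j hj
    simp only [Finset.mem_filter, Finset.mem_range] at hj ⊢
    refine ⟨by split <;> omega, ?_⟩
    have h4 : (w.rotate 1).rotate (if j = 0 then n - 1 else j - 1) = w.rotate j := by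
      rw [List.rotate_rotate]
      exact (key2 j hj.1).symm
    rw [h4]
    exact hj.2
  · intro i hi
    simp only [Finset.mem_filter, Finset.mem_range] at hi
    by_cases h : i + 1 = n
    · simp [h] <;> omega
    · simp [h] <;> omega
  · intro j hj
    simp only [Finset.mem_filter, Finset.mem_range] at hj
    by_cases h : j = 0
    · simp [h, Nat.sub_add_cancel hn1]
    · have h5 : j - 1 + 1 = j := by omega
      simp [h, h5] <;> omega

open Finset in
lemma count_rot (w : List ℕ) (P : List ℕ → Prop) [DecidablePred P] : ∀ t,
    ((range w.length).filter (fun i => P ((w.rotate t).rotate i))).card =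
    ((range w.length).filter (fun i => P (w.rotate i))).card := by
  intro t
  induction t with
  | zero => simp
  | succ t ih =>
    by_cases hw : w = []
    · subst hw; simp
    · have h2 := count_rot_one (w.rotate t) (by simpa using hw) P
      simp only [List.length_rotate, List.rotate_rotate] at h2
      simp only [List.rotate_rotate] at ih
      simp only [List.rotate_rotate]
      exact h2.trans ih

end PTCount

namespace PTCount

lemma split_last_nonzero : ∀ (y : List ℕ), y.sum ≠ 0 →
    ∃ u b m, y = u ++ (b+1) :: List.replicate m 0 := by
  intro y
  induction y with
  | nil => simp
  | cons c t ih =>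
    intro h
    by_cases ht : t.sum = 0
    · have hall : ∀ x ∈ t, x = 0 := by
        intro x hx
        have h1 : x ≤ t.sum := elem_le_sum hx
        omega
      have ht2 : t = List.replicate t.length 0 := List.eq_replicate_iff.2 ⟨rfl, hall⟩
      have hc : c ≠ 0 := by
        simp only [List.sum_cons] at h
        omega
      obtain ⟨b, rfl⟩ := Nat.exists_eq_succ_of_ne_zero hc
      exact ⟨[], b, t.length, by rw [← ht2]; rfl⟩
    · obtain ⟨u, b, m, rfl⟩ := ih ht
      exact ⟨c :: u, b, m, rfl⟩

open Finset in
lemma cycle_count : ∀ n : ℕ, ∀ (w : List ℕ) (r : ℕ), w.length = n → 1 ≤ r → w.sum + r = n →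
    ((range n).filter (fun i => Good r (w.rotate i))).card = r := by
  intro n
  induction n using Nat.strong_induction_on with
  | _ n IH =>
  intro w r hlen hr hsum
  by_cases h0 : w.sum = 0
  · have hrn : r = n := by omega
    have hall : ∀ i ∈ range n, Good r (w.rotate i) := by
      intro i _ j hj
      have hl : (w.rotate i).length = n := by rw [List.length_rotate, hlen]
      omega
    rw [filter_true_of_mem hall, card_range, hrn]
  · -- main case: find a rotation of the form U ++ [b+1, 0]
    have hn1 : 1 ≤ n := by omega
    have hzero : (0:ℕ) ∈ w := by
      by_contra hz
      have : ∀ x ∈ w, 1 ≤ x := by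
        intro x hx
        rcases Nat.eq_zero_or_pos x with rfl | h
        · exact absurd hx hz
        · exact h
      have := List.length_le_sum_of_one_le w this
      omega
    obtain ⟨w₁, w₂, hw12⟩ := List.append_of_mem hzero
    have hz1 : w.rotate (w₁.length + 1) = (w₂ ++ w₁) ++ [0] := by
      rw [hw12, show w₁ ++ 0 :: w₂ = (w₁ ++ [0]) ++ w₂ by simp,
        show w₁.length + 1 = (w₁ ++ [0]).length by simp,
        List.rotate_eq_drop_append_take (by simp),
        List.drop_left, List.take_left]
      simp
    have hperm1 : ((w₂ ++ w₁) ++ [0]).sum = w.sum := by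
      rw [← hz1]
      exact (List.rotate_perm w _).sum_eq
    have hysum : (w₂ ++ w₁).sum ≠ 0 := by
      simp only [List.sum_append, List.sum_cons, List.sum_nil] at hperm1 ⊢
      omega
    obtain ⟨u, b, m, hy2⟩ := split_last_nonzero (w₂ ++ w₁) hysum
    have hz2 : (w₂ ++ w₁) ++ [0] = (u ++ (b+1) :: 0 :: List.replicate m 0) := by
      rw [hy2]
      simp only [List.append_assoc, List.cons_append]
      rw [← List.replicate_succ', List.replicate_succ]
    set U : List ℕ := List.replicate m 0 ++ u with hU
    have hz3 : ((w₂ ++ w₁) ++ [0]).rotate (u.length + 2) = U ++ (b+1) :: 0 :: [] := by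
      rw [hz2, show u ++ (b+1) :: 0 :: List.replicate m 0
          = (u ++ [b+1, 0]) ++ List.replicate m 0 by simp,
        show u.length + 2 = (u ++ [b+1, 0]).length by simp,
        List.rotate_eq_drop_append_take (by simp),
        List.drop_left, List.take_left, hU]
      simp
    have hrot : w.rotate ((w₁.length + 1) + (u.length + 2)) = U ++ (b+1) :: 0 :: [] := by
      rw [← List.rotate_rotate, hz1, hz3]
    -- facts about U
    have hUsum : U.sum + (b+1) = w.sum := by
      have := (List.rotate_perm w ((w₁.length + 1) + (u.length + 2))).sum_eq
      rw [hrot] at this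
      simp only [List.sum_append, List.sum_cons, List.sum_nil] at this
      omega
    have hUlen : U.length + 2 = n := by
      have := List.length_rotate w ((w₁.length + 1) + (u.length + 2))
      rw [hrot] at this
      simp only [List.length_append, List.length_cons, List.length_nil] at this
      omega
    -- replace count for w by count for the rotated word
    have hcr := count_rot w (Good r) ((w₁.length + 1) + (u.length + 2))
    rw [hrot, hlen] at hcr
    rw [← hcr]
    -- now count rotations of z := U ++ [b+1, 0]
    set z : List ℕ := U ++ (b+1) :: 0 :: [] with hzdef
    have hbad : ¬ Good r (z.rotate (n-1)) := by
      have hz4 : z.rotate (n-1) = 0 :: (U ++ [b+1]) := by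
        rw [hzdef, show U ++ (b+1) :: 0 :: [] = (U ++ [b+1]) ++ [0] by simp]
        rw [show n - 1 = (U ++ [b+1]).length by
          simp only [List.length_append, List.length_cons, List.length_nil]; omega]
        rw [List.rotate_eq_drop_append_take (by
            simp only [List.length_append, List.length_cons, List.length_nil]; omega),
          List.drop_left, List.take_left]
        simp
      intro hg
      have h5 := hg (n-1) (by
        rw [hz4]
        simp only [List.length_cons, List.length_append, List.length_nil]
        omega)
      rw [hz4, show (0 : ℕ) :: (U ++ [b+1]) = (0 :: U) ++ [b+1] by simp] at h5
      rw [show n - 1 = ((0 : ℕ) :: U).length by simp only [List.length_cons]; omega,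
        List.take_left] at h5
      simp only [List.sum_cons, List.length_cons, Nat.zero_add] at h5
      omega
    have hswap : ∀ i < n - 1, Good r (z.rotate i) ↔ Good r ((U ++ [b]).rotate i) := by
      intro i hi
      have hiU : i ≤ U.length := by omega
      have h6 : z.rotate i = U.drop i ++ (b+1) :: 0 :: U.take i := by
        rw [hzdef, List.rotate_eq_drop_append_take (by simp; omega),
          List.drop_append_of_le_length hiU, List.take_append_of_le_length hiU]
        simp
      have h7 : (U ++ [b]).rotate i = U.drop i ++ b :: U.take i := by
        rw [List.rotate_eq_drop_append_take (by simp; omega),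
          List.drop_append_of_le_length hiU, List.take_append_of_le_length hiU]
        simp
      rw [h6, h7]
      apply good_swap
      have hps := (List.rotate_perm z i).sum_eq
      have hpl := List.length_rotate z i
      rw [h6] at hps hpl
      rw [hps, hpl, hzdef]
      simp only [List.length_append, List.sum_append, List.length_cons, List.sum_cons,
        List.length_nil, List.sum_nil]
      omega
    -- split off the last index
    have hrange : range n = insert (n-1) (range (n-1)) := by
      conv_lhs => rw [show n = n - 1 + 1 by omega]
      rw [Finset.range_add_one]
    rw [hrange, filter_insert, if_neg hbad]
    have hfc : filter (fun i => Good r (z.rotate i)) (range (n-1))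
        = filter (fun i => Good r ((U ++ [b]).rotate i)) (range (n-1)) := by
      apply Finset.filter_congr
      intro i hi
      simp only [Finset.mem_range] at hi
      exact hswap i hi
    rw [hfc]
    apply IH (n-1) (by omega) (U ++ [b]) r
    · simp only [List.length_append, List.length_cons, List.length_nil]
      omega
    · exact hr
    · simp only [List.sum_append, List.sum_cons, List.sum_nil]
      omega

end PTCount

namespace PTCount

open PlaneTree

def decap : PlaneTree → List ℕ := fun T => match T with | .node ts => forestCode ts

def TSet (n k r : ℕ) : Set PlaneTree := {T | T.edges = n ∧ T.leaves = k ∧ T.rootDegree = r}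

def GSet (n k r : ℕ) : Set (List ℕ) := {w | w ∈ Wset n (n-r) k ∧ Good r w}

lemma decap_image (n k r : ℕ) (hrn : r ≤ n) : decap '' TSet n k r = GSet n k r := by
  ext w
  constructor
  · rintro ⟨⟨ts⟩, ⟨h1, h2, h3⟩, rfl⟩
    rw [edges_node] at h1
    have h3' : ts.length = r := h3
    have h2' : (ts.map leafAux).sum = k := h2
    have hd : decap (node ts) = forestCode ts := rfl
    have hlf := length_forestCode ts
    have hsf := sum_forestCode ts
    have hcf := count_forestCode ts
    refine ⟨⟨?_, ?_, ?_⟩, ?_⟩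
    · rw [hd, hlf]; omega
    · rw [hd, hsf]; omega
    · rw [hd, hcf]; omega
    · intro i hi
      have hgf := good_forestCode ts i (by rwa [← hd])
      rw [← hd, h3'] at hgf
      exact hgf
  · rintro ⟨⟨hl, hs, hc⟩, hg⟩
    have hlen : w.length = w.sum + r := by omega
    obtain ⟨ts, hts, hcode⟩ := forestCode_surj w r hlen hg
    have hlf := length_forestCode ts
    have hsf := sum_forestCode ts
    have hcf := count_forestCode ts
    rw [hcode] at hlf hsf hcf
    refine ⟨node ts, ⟨?_, ?_, ?_⟩, by rw [show decap (node ts) = forestCode ts from rfl, hcode]⟩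
    · rw [edges_node]; omega
    · show (ts.map leafAux).sum = k
      omega
    · show ts.length = r
      exact hts

lemma decap_injOn (n k r : ℕ) : Set.InjOn decap (TSet n k r) := by
  intro T hT U hU h
  cases T with | node ts =>
  cases U with | node us =>
  have : forestCode ts = forestCode us := h
  rw [forestCode_inj ts us this]

lemma card_TSet_eq (n k r : ℕ) (hrn : r ≤ n) :
    Nat.card {T : PlaneTree // T.edges = n ∧ T.leaves = k ∧ T.rootDegree = r}
      = (GSet n k r).ncard := by
  have h1 : Nat.card {T : PlaneTree // T.edges = n ∧ T.leaves = k ∧ T.rootDegree = r}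
      = (TSet n k r).ncard := Nat.card_coe_set_eq (TSet n k r)
  rw [h1, ← decap_image n k r hrn, Set.ncard_image_of_injOn (decap_injOn n k r)]

open Finset in
lemma double_count (n k r : ℕ) (hr : 1 ≤ r) (hrn : r ≤ n) :
    n * (GSet n k r).ncard = r * (Wset n (n-r) k).ncard := by
  classical
  set WF : Finset (List ℕ) := (finite_W n (n-r) k).toFinset with hWF
  have hWmem : ∀ w, w ∈ WF ↔ w ∈ Wset n (n-r) k := by
    intro w; rw [hWF, Set.Finite.mem_toFinset]
  set GF : Finset (List ℕ) := WF.filter (fun w => Good r w) with hGF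
  have hGmem : ∀ w, w ∈ GF ↔ w ∈ Wset n (n-r) k ∧ Good r w := by
    intro w; rw [hGF, Finset.mem_filter, hWmem]
  have hG : (GSet n k r).ncard = GF.card := by
    rw [← Set.ncard_coe_finset]
    congr 1
    ext w
    rw [Finset.mem_coe, hGmem]
    rfl
  have hW : (Wset n (n-r) k).ncard = WF.card := by
    rw [← Set.ncard_coe_finset]
    congr 1
    ext w
    rw [Finset.mem_coe, hWmem]
  set PF : Finset (List ℕ × ℕ) := (WF ×ˢ range n).filter (fun p => Good r (p.1.rotate p.2))
    with hPF
  have hPmem : ∀ p : List ℕ × ℕ, p ∈ PF ↔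
      (p.1 ∈ Wset n (n-r) k ∧ p.2 < n ∧ Good r (p.1.rotate p.2)) := by
    intro p
    rw [hPF, Finset.mem_filter, Finset.mem_product, Finset.mem_range, hWmem]
    tauto
  have hrotW : ∀ w ∈ Wset n (n-r) k, ∀ i, w.rotate i ∈ Wset n (n-r) k := by
    rintro w ⟨h1, h2, h3⟩ i
    have hp := List.rotate_perm w i
    exact ⟨by rw [hp.length_eq, h1], by rw [hp.sum_eq, h2], by rw [hp.count_eq, h3]⟩
  have ha : PF.card = r * WF.card := by
    rw [Finset.card_eq_sum_card_fiberwise (f := Prod.fst) (t := WF)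
      (fun p hp => (hWmem p.1).2 ((hPmem p).1 hp).1)]
    rw [Finset.sum_congr rfl (fun w hw => ?_), Finset.sum_const, smul_eq_mul, Nat.mul_comm]
    have hfib : (PF.filter fun p => p.1 = w)
        = ((range n).filter (fun i => Good r (w.rotate i))).image (fun i => (w, i)) := by
      ext p
      rw [Finset.mem_filter, hPmem, Finset.mem_image]
      constructor
      · rintro ⟨⟨hp1, hp2, hp3⟩, rfl⟩
        exact ⟨p.2, by rw [Finset.mem_filter, Finset.mem_range]; exact ⟨hp2, hp3⟩, rfl⟩
      · rintro ⟨i, hi, rfl⟩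
        rw [Finset.mem_filter, Finset.mem_range] at hi
        exact ⟨⟨(hWmem w).1 hw, hi.1, hi.2⟩, rfl⟩
    rw [hfib, Finset.card_image_of_injective _ (fun a b h => by injection h)]
    have hww := (hWmem w).1 hw
    exact cycle_count n w r hww.1 hr (by have := hww.2.1; omega)
  have hb : PF.card = n * GF.card := by
    rw [Finset.card_eq_sum_card_fiberwise (f := fun p => p.1.rotate p.2) (t := GF)
      (fun p hp => by
        rw [Finset.mem_coe, hGmem]
        have h := (hPmem p).1 hp
        exact ⟨hrotW p.1 h.1 p.2, h.2.2⟩)]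
    rw [Finset.sum_congr rfl (fun g hg => ?_), Finset.sum_const, smul_eq_mul, Nat.mul_comm]
    have hgg := (hGmem g).1 hg
    have hglen : g.length = n := hgg.1.1
    rw [← Finset.card_range n]
    apply Finset.card_bij' (fun (p : List ℕ × ℕ) _ => p.2) (fun i _ => (g.rotate (n - i), i))
    · intro p hp
      rw [Finset.mem_filter] at hp
      rw [Finset.mem_range]
      exact ((hPmem p).1 hp.1).2.1
    · intro i hi
      rw [Finset.mem_range] at hi
      rw [Finset.mem_filter, hPmem]
      have hri : (g.rotate (n - i)).rotate i = g := by
        rw [List.rotate_rotate, show n - i + i = n by omega, ← hglen, List.rotate_length]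
      exact ⟨⟨hrotW g hgg.1 (n - i), hi, by rw [hri]; exact hgg.2⟩, hri⟩
    · intro p hp
      rw [Finset.mem_filter] at hp
      have h := (hPmem p).1 hp.1
      have hplen : p.1.length = n := h.1.1
      have : (p.1.rotate p.2).rotate (n - p.2) = p.1 := by
        rw [List.rotate_rotate, show p.2 + (n - p.2) = n by omega, ← hplen, List.rotate_length]
      rw [hp.2] at this
      exact Prod.ext this rfl
    · intro i hi
      rfl
  rw [hG, hW, ← hb, ha]

end PTCount


lemma PTCount.edges_zero_eq (t : PlaneTree) (h : t.edges = 0) : t = PlaneTree.node [] := by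
  cases t with | node cs =>
  rw [PlaneTree.edges_node] at h
  have hl : cs.length = 0 := by omega
  rw [List.length_eq_zero_iff.1 hl]

/-- Counting plane trees on `n` edges with `k` leaves and root degree `r`:
for `n > k > r`, `n * T_n(k,r) = r * C(n,k) * C(n-r-1, n-k-1)`,
and for `n = k = r`, `T_n(k,r) = 1`. -/
theorem planeTree_count_leaves_root (n k r : ℕ) :
    (k < n → r < k →
      n * Nat.card {T : PlaneTree //
          T.edges = n ∧ T.leaves = k ∧ T.rootDegree = r} =
        r * (Nat.choose n k * Nat.choose (n - r - 1) (n - k - 1))) ∧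
    (n = k → k = r →
      Nat.card {T : PlaneTree //
          T.edges = n ∧ T.leaves = k ∧ T.rootDegree = r} = 1) := by
  constructor
  · intro hkn hrk
    rcases Nat.eq_zero_or_pos r with rfl | hr
    · have hE : IsEmpty {T : PlaneTree // T.edges = n ∧ T.leaves = k ∧ T.rootDegree = 0} := by
        constructor
        rintro ⟨⟨ts⟩, h1, h2, h3⟩
        have hts : ts = [] := List.length_eq_zero_iff.1 h3
        subst hts
        rw [PlaneTree.edges_node] at h1
        simp only [List.map_nil, List.sum_nil, List.length_nil, Nat.add_zero] at h1
        omega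
      rw [Nat.card_of_isEmpty]
      simp
    · have hrn : r ≤ n := by omega
      rw [PTCount.card_TSet_eq n k r hrn, PTCount.double_count n k r hr hrn]
      congr 1
      have hcw := PTCount.card_W (n-1) k (n-r-1) (by omega)
      rw [show n - 1 + 1 = n by omega, show n - r - 1 + 1 = n - r by omega,
        show n - 1 - k = n - k - 1 by omega] at hcw
      exact hcw
  · intro h1 h2
    subst h1
    subst h2
    have hprops : (PlaneTree.node (List.replicate n (PlaneTree.node []))).edges = n ∧
        (PlaneTree.node (List.replicate n (PlaneTree.node []))).leaves = n ∧
        (PlaneTree.node (List.replicate n (PlaneTree.node []))).rootDegree = n := by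
      refine ⟨?_, ?_, ?_⟩
      · rw [PlaneTree.edges_node, List.map_replicate]
        have h0 : (PlaneTree.node ([] : List PlaneTree)).edges = 0 := by
          rw [PlaneTree.edges_node]; simp
        rw [h0]
        simp
      · show (List.map PlaneTree.leafAux (List.replicate n (PlaneTree.node []))).sum = n
        rw [List.map_replicate]
        have h0 : (PlaneTree.node ([] : List PlaneTree)).leafAux = 1 := by
          rw [PlaneTree.leafAux_node]; simp
        rw [h0]
        simp
      · show (List.replicate n (PlaneTree.node [])).length = n
        simp
    haveI : Unique {T : PlaneTree // T.edges = n ∧ T.leaves = n ∧ T.rootDegree = n} := by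
      refine ⟨⟨⟨PlaneTree.node (List.replicate n (PlaneTree.node [])), hprops⟩⟩, ?_⟩
      rintro ⟨⟨ts⟩, h1, h2, h3⟩
      apply Subtype.ext
      show PlaneTree.node ts = PlaneTree.node (List.replicate n (PlaneTree.node []))
      congr 1
      have h3' : ts.length = n := h3
      rw [PlaneTree.edges_node] at h1
      have hsum0 : (ts.map PlaneTree.edges).sum = 0 := by omega
      apply List.eq_replicate_iff.2
      refine ⟨h3', ?_⟩
      intro t ht
      apply PTCount.edges_zero_eq
      have : t.edges ∈ ts.map PlaneTree.edges := List.mem_map_of_mem ht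
      have := PTCount.elem_le_sum this
      omega
    exact Nat.card_unique
end

section
/- For n > m, the number of plane trees on n edges with exactly m internal nodes equals C(n-1, m) * M_{n-m-1}, where M_j = sum over k from 0 to floor(j/2) of C(j, 2k) * C_k is the j-th Motzkin number and C_k is the k-th Catalan number. -/
/-- The `j`-th Motzkin number. -/
def motzkin (j : ℕ) : ℕ :=
  ∑ k ∈ Finset.range (j / 2 + 1), Nat.choose j (2 * k) * catalan k

namespace PlaneTree

lemma attach_map_sum (ts : List PlaneTree) (f : PlaneTree → ℕ) :
    (ts.attach.map (fun t => f t.1)).sum = (ts.map f).sum := by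
  rw [show (fun (t : {x // x ∈ ts}) => f t.1) = f ∘ Subtype.val from rfl, ← List.map_map,
    List.attach_map_subtype_val]

lemma internalAux_node (ts : List PlaneTree) :
    (node ts).internalAux = (if ts.length = 1 then 1 else 0) + (ts.map internalAux).sum := by
  rw [internalAux, attach_map_sum]

lemma internalAux_eq (T : PlaneTree) :
    T.internalAux = (if T.rootDegree = 1 then 1 else 0) + T.internals := by
  obtain ⟨ts⟩ := T
  rw [internalAux_node, internals, rootDegree]

lemma edges_cons (t : PlaneTree) (ts : List PlaneTree) :
    (node (t :: ts)).edges = t.edges + (node ts).edges + 1 := by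
  simp [edges_node]; ring

lemma internals_cons (t : PlaneTree) (ts : List PlaneTree) :
    (node (t :: ts)).internals = t.internalAux + (node ts).internals := by
  simp [internals]

lemma edges_nil : (node []).edges = 0 := by simp [edges_node]
lemma internals_nil : (node []).internals = 0 := by simp [internals]

lemma eq_nil_of_edges_eq_zero (T : PlaneTree) (h : T.edges = 0) : T = node [] := by
  obtain ⟨ts⟩ := T
  rw [edges_node] at h
  have : ts.length = 0 := by omega
  simp only [List.length_eq_zero_iff] at this
  subst this; rfl

def children : PlaneTree → List PlaneTree
  | node ts => ts

def decomp : PlaneTree → PlaneTree × PlaneTree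
  | node [] => (node [], node [])
  | node (t :: ts) => (t, node ts)

def comp (t T' : PlaneTree) : PlaneTree := node (t :: T'.children)

lemma comp_decomp (T : PlaneTree) (h : T.edges ≠ 0) :
    comp (decomp T).1 (decomp T).2 = T := by
  obtain ⟨ts⟩ := T
  cases ts with
  | nil => exact absurd edges_nil h
  | cons t ts => rfl

lemma decomp_comp (t T' : PlaneTree) : decomp (comp t T') = (t, T') := by
  obtain ⟨ts⟩ := T'; rfl

lemma edges_comp (t T' : PlaneTree) : (comp t T').edges = t.edges + T'.edges + 1 := by
  obtain ⟨ts⟩ := T'; exact edges_cons t ts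

lemma internals_comp (t T' : PlaneTree) :
    (comp t T').internals = t.internalAux + T'.internals := by
  obtain ⟨ts⟩ := T'; exact internals_cons t ts

lemma decomp_spec (T : PlaneTree) (h : T.edges ≠ 0) :
    T.edges = (decomp T).1.edges + (decomp T).2.edges + 1 ∧
    T.internals = (decomp T).1.internalAux + (decomp T).2.internals := by
  constructor
  · conv_lhs => rw [← comp_decomp T h, edges_comp]
  · conv_lhs => rw [← comp_decomp T h, internals_comp]
def eqvCons (n m : ℕ) :
    {T : PlaneTree // T.edges = n + 1 ∧ T.internals = m} ≃
    (Σ p : Fin (n+1) × Fin (m+1),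
      ({t : PlaneTree // t.edges = p.1.1 ∧ t.internalAux = p.2.1} ×
       {T : PlaneTree // T.edges = n - p.1.1 ∧ T.internals = m - p.2.1})) where
  toFun x := by
    have h0 : x.1.edges ≠ 0 := by rw [x.2.1]; omega
    have hs := decomp_spec x.1 h0
    refine ⟨(⟨(decomp x.1).1.edges, ?_⟩, ⟨(decomp x.1).1.internalAux, ?_⟩),
      ⟨(decomp x.1).1, rfl, rfl⟩, ⟨(decomp x.1).2, ?_, ?_⟩⟩
    · have := x.2.1; omega
    · have := x.2.2; omega
    · have := x.2.1; dsimp only; omega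
    · have := x.2.2; dsimp only; omega
  invFun y := ⟨comp y.2.1.1 y.2.2.1, by
      obtain ⟨⟨e, v⟩, ⟨t, ht1, ht2⟩, ⟨T', hT1, hT2⟩⟩ := y
      have he : (e : ℕ) ≤ n := by omega
      have hv : (v : ℕ) ≤ m := by omega
      constructor
      · rw [edges_comp]; simp only at ht1 hT1 ⊢; omega
      · rw [internals_comp]; simp only at ht2 hT2 ⊢; omega⟩
  left_inv x := by
    have h0 : x.1.edges ≠ 0 := by rw [x.2.1]; omega
    exact Subtype.ext (comp_decomp x.1 h0)
  right_inv y := by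
    obtain ⟨⟨e, v⟩, ⟨t, ht1, ht2⟩, ⟨T', hT1, hT2⟩⟩ := y
    obtain ⟨e, he⟩ := e
    obtain ⟨v, hv⟩ := v
    simp only at ht1 ht2
    subst ht1 ht2
    obtain ⟨ts'⟩ := T'
    rfl

lemma finite_edges : ∀ n : ℕ, Finite {T : PlaneTree // T.edges = n} := by
  intro n
  induction n using Nat.strong_induction_on with
  | _ n ih =>
    match n with
    | 0 =>
      refine Finite.of_surjective (fun _ : PUnit => (⟨node [], edges_nil⟩ : {T // T.edges = 0})) ?_
      rintro ⟨T, hT⟩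
      exact ⟨PUnit.unit, Subtype.ext (eq_nil_of_edges_eq_zero T hT).symm⟩
    | n + 1 =>
      haveI : ∀ e : Fin (n+1), Finite {t : PlaneTree // t.edges = (e : ℕ)} :=
        fun e => ih e e.2
      haveI : ∀ e : Fin (n+1), Finite {t : PlaneTree // t.edges = n - (e : ℕ)} :=
        fun e => ih (n - e) (by omega)
      refine Finite.of_surjective
        (fun y : Σ e : Fin (n+1), ({t : PlaneTree // t.edges = (e : ℕ)} ×
            {t : PlaneTree // t.edges = n - (e : ℕ)}) =>
          (⟨comp y.2.1.1 y.2.2.1, by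
            obtain ⟨⟨e, he⟩, ⟨t, ht⟩, ⟨T', hT'⟩⟩ := y
            rw [edges_comp]; simp only at ht hT' ⊢; omega⟩ : {T // T.edges = n + 1})) ?_
      rintro ⟨T, hT⟩
      have h0 : T.edges ≠ 0 := by omega
      have hs := (decomp_spec T h0).1
      refine ⟨⟨⟨(decomp T).1.edges, by omega⟩, ⟨(decomp T).1, rfl⟩,
        ⟨(decomp T).2, by simp only; omega⟩⟩, ?_⟩
      exact Subtype.ext (comp_decomp T h0)

lemma finite_sub (n : ℕ) (p : PlaneTree → Prop) (h : ∀ T, p T → T.edges = n) :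
    Finite {T : PlaneTree // p T} := by
  haveI := finite_edges n
  refine Finite.of_injective
    (fun x : {T // p T} => (⟨x.1, h x.1 x.2⟩ : {T // T.edges = n})) ?_
  intro x y hxy
  exact Subtype.ext (by simpa [Subtype.ext_iff] using hxy)

end PlaneTree

open PlaneTree

/-- number of trees with n edges and m internal (non-root, deg 1) nodes -/
noncomputable def aT (n m : ℕ) : ℕ := Nat.card {T : PlaneTree // T.edges = n ∧ T.internals = m}
/-- weighted: internalAux counts the root if it has degree 1 -/
noncomputable def bT (n m : ℕ) : ℕ := Nat.card {T : PlaneTree // T.edges = n ∧ T.internalAux = m}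
/-- root degree 1 trees -/
noncomputable def cT (n m : ℕ) : ℕ :=
  Nat.card {T : PlaneTree // (T.edges = n ∧ T.internals = m) ∧ T.rootDegree = 1}
noncomputable def dT (n m : ℕ) : ℕ :=
  Nat.card {T : PlaneTree // (T.edges = n ∧ T.internals = m) ∧ T.rootDegree ≠ 1}

instance instFinAT (n m : ℕ) : Finite {T : PlaneTree // T.edges = n ∧ T.internals = m} :=
  finite_sub n _ (fun _ h => h.1)
instance instFinBT (n m : ℕ) : Finite {T : PlaneTree // T.edges = n ∧ T.internalAux = m} :=
  finite_sub n _ (fun _ h => h.1)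
instance instFinCT (n m : ℕ) :
    Finite {T : PlaneTree // (T.edges = n ∧ T.internals = m) ∧ T.rootDegree = 1} :=
  finite_sub n _ (fun _ h => h.1.1)
instance instFinDT (n m : ℕ) :
    Finite {T : PlaneTree // (T.edges = n ∧ T.internals = m) ∧ T.rootDegree ≠ 1} :=
  finite_sub n _ (fun _ h => h.1.1)

lemma aT_zero (m : ℕ) : aT 0 m = if m = 0 then 1 else 0 := by
  rcases Nat.eq_zero_or_pos m with hm | hm
  · subst hm
    rw [aT, if_pos rfl, Nat.card_eq_one_iff_unique]
    constructor
    · constructor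
      rintro ⟨T, hT⟩ ⟨T', hT'⟩
      exact Subtype.ext ((eq_nil_of_edges_eq_zero T hT.1).trans
        (eq_nil_of_edges_eq_zero T' hT'.1).symm)
    · exact ⟨⟨node [], edges_nil, internals_nil⟩⟩
  · rw [aT, if_neg (by omega), Nat.card_eq_zero]
    left
    constructor
    rintro ⟨T, hT⟩
    have := eq_nil_of_edges_eq_zero T hT.1
    subst this
    rw [internals_nil] at hT
    omega

lemma exists_singleton {T : PlaneTree} (h : T.rootDegree = 1) : ∃ t, T = node [t] := by
  obtain ⟨ts⟩ := T
  rw [rootDegree] at h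
  obtain ⟨t, rfl⟩ := List.length_eq_one_iff.mp h
  exact ⟨t, rfl⟩

lemma edges_single (t : PlaneTree) : (node [t]).edges = t.edges + 1 := by
  rw [edges_cons, edges_nil]
lemma internals_single (t : PlaneTree) : (node [t]).internals = t.internalAux := by
  simp [internals_cons, internals_nil]

def eqvDeg1 (n v : ℕ) :
    {T : PlaneTree // (T.edges = n+1 ∧ T.internals = v) ∧ T.rootDegree = 1} ≃
    {t : PlaneTree // t.edges = n ∧ t.internalAux = v} where
  toFun x := ⟨(decomp x.1).1, by
    obtain ⟨T, ⟨h1, h2⟩, h3⟩ := x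
    obtain ⟨t, rfl⟩ := exists_singleton h3
    rw [edges_single] at h1
    rw [internals_single] at h2
    exact ⟨by show t.edges = n; omega, by show t.internalAux = v; exact h2⟩⟩
  invFun y := ⟨node [y.1], ⟨⟨by rw [edges_single, y.2.1], by rw [internals_single, y.2.2]⟩, rfl⟩⟩
  left_inv x := by
    obtain ⟨T, ⟨h1, h2⟩, h3⟩ := x
    obtain ⟨t, rfl⟩ := exists_singleton h3
    rfl
  right_inv y := rfl

lemma cT_succ (n v : ℕ) : cT (n+1) v = bT n v := Nat.card_congr (eqvDeg1 n v)

lemma cT_zero (v : ℕ) : cT 0 v = 0 := by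
  rw [cT, Nat.card_eq_zero]
  left
  constructor
  rintro ⟨T, ⟨h1, _⟩, h3⟩
  rw [eq_nil_of_edges_eq_zero T h1] at h3
  simp [rootDegree] at h3

lemma bT_zero (v : ℕ) : bT 0 v = if v = 0 then 1 else 0 := by
  rcases Nat.eq_zero_or_pos v with hv | hv
  · subst hv
    rw [bT, if_pos rfl, Nat.card_eq_one_iff_unique]
    refine ⟨⟨?_⟩, ⟨⟨node [], edges_nil, by simp [internalAux_node]⟩⟩⟩
    rintro ⟨T, hT⟩ ⟨T', hT'⟩
    exact Subtype.ext ((eq_nil_of_edges_eq_zero T hT.1).trans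
      (eq_nil_of_edges_eq_zero T' hT'.1).symm)
  · rw [bT, if_neg (by omega), Nat.card_eq_zero]
    left
    constructor
    rintro ⟨T, h1, h2⟩
    rw [eq_nil_of_edges_eq_zero T h1] at h2
    simp [internalAux_node] at h2
    omega

open Classical in
lemma aT_split (n m : ℕ) : aT n m = cT n m + dT n m := by
  rw [aT, ← Nat.card_congr (Equiv.sumCompl (fun y : {T : PlaneTree //
      T.edges = n ∧ T.internals = m} => y.1.rootDegree = 1)), Nat.card_sum]
  congr 1
  · exact Nat.card_congr (Equiv.subtypeSubtypeEquivSubtypeInter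
      (fun T : PlaneTree => T.edges = n ∧ T.internals = m) (fun T => T.rootDegree = 1))
  · exact Nat.card_congr (Equiv.subtypeSubtypeEquivSubtypeInter
      (fun T : PlaneTree => T.edges = n ∧ T.internals = m) (fun T => ¬ T.rootDegree = 1))

open Classical in
lemma bT_split (n v : ℕ) :
    bT n v = dT n v + (if v = 0 then 0 else cT n (v - 1)) := by
  rw [bT, ← Nat.card_congr (Equiv.sumCompl (fun y : {T : PlaneTree //
      T.edges = n ∧ T.internalAux = v} => y.1.rootDegree = 1)), Nat.card_sum, add_comm]
  congr 1
  · -- non-root-degree-1 part equals dT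
    rw [dT]
    refine Nat.card_congr ((Equiv.subtypeSubtypeEquivSubtypeInter
      (fun T : PlaneTree => T.edges = n ∧ T.internalAux = v) (fun T => ¬ T.rootDegree = 1)).trans
      (Equiv.subtypeEquiv (Equiv.refl _) fun T => ?_))
    simp only [Equiv.refl_apply]
    rw [internalAux_eq T]
    constructor
    · rintro ⟨⟨h1, h2⟩, h3⟩
      rw [if_neg h3] at h2
      exact ⟨⟨h1, by omega⟩, h3⟩
    · rintro ⟨⟨h1, h2⟩, h3⟩
      rw [if_neg h3]
      exact ⟨⟨h1, by omega⟩, h3⟩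
  · -- root-degree-1 part
    rcases Nat.eq_zero_or_pos v with hv | hv
    · subst hv
      rw [if_pos rfl, Nat.card_eq_zero]
      left
      constructor
      rintro ⟨⟨T, h1, h2⟩, h3⟩
      simp only at h3
      rw [internalAux_eq T, if_pos h3] at h2
      omega
    · rw [if_neg (by omega), cT]
      refine Nat.card_congr ((Equiv.subtypeSubtypeEquivSubtypeInter
        (fun T : PlaneTree => T.edges = n ∧ T.internalAux = v) (fun T => T.rootDegree = 1)).trans
        (Equiv.subtypeEquiv (Equiv.refl _) fun T => ?_))
      simp only [Equiv.refl_apply]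
      rw [internalAux_eq T]
      constructor
      · rintro ⟨⟨h1, h2⟩, h3⟩
        rw [if_pos h3] at h2
        exact ⟨⟨h1, by omega⟩, h3⟩
      · rintro ⟨⟨h1, h2⟩, h3⟩
        rw [if_pos h3]
        exact ⟨⟨h1, by omega⟩, h3⟩

lemma aT_succ (n m : ℕ) :
    aT (n+1) m = ∑ e ∈ Finset.range (n+1), ∑ v ∈ Finset.range (m+1),
      bT e v * aT (n-e) (m-v) := by
  classical
  rw [aT, Nat.card_congr (eqvCons n m)]
  haveI I1 : ∀ (e v : ℕ), Fintype {t : PlaneTree // t.edges = e ∧ t.internalAux = v} :=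
    fun _ _ => Fintype.ofFinite _
  haveI I2 : ∀ (e v : ℕ), Fintype {T : PlaneTree // T.edges = e ∧ T.internals = v} :=
    fun _ _ => Fintype.ofFinite _
  rw [Nat.card_eq_fintype_card, Fintype.card_sigma]
  simp_rw [Fintype.card_prod, ← Nat.card_eq_fintype_card]
  rw [Fintype.sum_prod_type]
  rw [Fin.sum_univ_eq_sum_range (fun e => ∑ v : Fin (m+1),
    Nat.card {t : PlaneTree // t.edges = e ∧ t.internalAux = (v : ℕ)} *
    Nat.card {T : PlaneTree // T.edges = n - e ∧ T.internals = m - (v : ℕ)})]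
  refine Finset.sum_congr rfl fun e _ => ?_
  rw [Fin.sum_univ_eq_sum_range (fun v =>
    Nat.card {t : PlaneTree // t.edges = e ∧ t.internalAux = v} *
    Nat.card {T : PlaneTree // T.edges = n - e ∧ T.internals = m - v})]
  rfl

open Finset

-- hockey stick in range form
lemma hockey (p N : ℕ) :
    ∑ a ∈ range (N+1), a.choose p = (N+1).choose (p+1) := by
  rw [← Nat.sum_Icc_choose]
  refine (Finset.sum_subset ?_ ?_).symm
  · intro a ha
    simp only [mem_Icc] at ha
    simp only [mem_range]; omega
  · intro a ha hna
    simp only [mem_range] at ha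
    simp only [mem_Icc] at hna
    exact Nat.choose_eq_zero_of_lt (by omega)

-- Vandermonde-type convolution (A2)
lemma choose_conv (q p N : ℕ) :
    ∑ a ∈ range (N+1), a.choose p * (N-a).choose q = (N+1).choose (p+q+1) := by
  induction q generalizing N with
  | zero => simpa using hockey p N
  | succ q ihq =>
    induction N with
    | zero =>
      simp [Nat.choose_eq_zero_of_lt (show 0 < q+1 by omega),
        Nat.choose_eq_zero_of_lt (show 1 < p+(q+1)+1 by omega)]
    | succ N ihN =>
      rw [Finset.sum_range_succ]
      have h1 : (N+1) - (N+1) = 0 := by omega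
      rw [h1, Nat.choose_eq_zero_of_lt (show 0 < q+1 by omega), Nat.mul_zero, Nat.add_zero]
      have h2 : ∀ a ∈ range (N+1), a.choose p * ((N+1)-a).choose (q+1)
          = a.choose p * (N-a).choose q + a.choose p * (N-a).choose (q+1) := by
        intro a ha
        simp only [mem_range] at ha
        have : (N+1) - a = (N-a) + 1 := by omega
        rw [this, Nat.choose_succ_succ', Nat.mul_add]
      rw [Finset.sum_congr rfl h2, Finset.sum_add_distrib, ihq, ihN]
      rw [show p + (q+1) + 1 = (p+q+1) + 1 from by omega]
      exact (Nat.choose_succ_succ' (N+1) (p+q+1)).symm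

-- shifted Vandermonde (V)
lemma choose_conv' (i j m : ℕ) :
    ∑ v ∈ range (m+1), (i+v).choose i * (j+(m-v)).choose j = (i+j+m+1).choose m := by
  have hA := choose_conv j i (i+j+m)
  have hres : ∑ a ∈ range (i+j+m+1), a.choose i * (i+j+m-a).choose j
      = ∑ a ∈ Ico i (i+m+1), a.choose i * (i+j+m-a).choose j := by
    refine (Finset.sum_subset ?_ ?_).symm
    · intro a ha; simp only [mem_Ico] at ha; simp only [mem_range]; omega
    · intro a ha hna
      simp only [mem_range] at ha
      simp only [mem_Ico] at hna
      rcases Nat.lt_or_ge a i with h | h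
      · rw [Nat.choose_eq_zero_of_lt h, Nat.zero_mul]
      · have : i + m + 1 ≤ a := by omega
        rw [Nat.choose_eq_zero_of_lt (show i+j+m-a < j by omega), Nat.mul_zero]
  rw [hres, Finset.sum_Ico_eq_sum_range] at hA
  have h2 : i + m + 1 - i = m + 1 := by omega
  rw [h2] at hA
  have h3 : ∀ v ∈ range (m+1), (i+v).choose i * (i+j+m-(i+v)).choose j
      = (i+v).choose i * (j+(m-v)).choose j := by
    intro v hv; simp only [mem_range] at hv
    congr 2
    omega
  rw [Finset.sum_congr rfl h3] at hA
  rw [hA]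
  rw [show i+j+1 = (i+j+m+1) - m from by omega]
  exact Nat.choose_symm (by omega)

-- extension of the motzkin sum
lemma motzkin_eq (j K : ℕ) (h : j/2 + 1 ≤ K) :
    motzkin j = ∑ k ∈ range K, j.choose (2*k) * catalan k := by
  rw [motzkin]
  refine Finset.sum_subset ?_ ?_
  · intro k hk; simp only [mem_range] at hk ⊢; omega
  · intro k hk hnk
    simp only [mem_range] at hk hnk
    rw [Nat.choose_eq_zero_of_lt (by omega), Nat.zero_mul]

-- (P1)
lemma motzkin_succ (j : ℕ) :
    motzkin (j+1) = motzkin j + ∑ k ∈ range (j+1), j.choose (2*k+1) * catalan (k+1) := by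
  rw [motzkin_eq (j+1) (j+2) (by omega), motzkin_eq j (j+2) (by omega)]
  rw [Finset.sum_range_succ' (fun k => (j+1).choose (2*k) * catalan k) (j+1),
      Finset.sum_range_succ' (fun k => j.choose (2*k) * catalan k) (j+1)]
  simp only [Nat.mul_zero, Nat.choose_zero_right, catalan_zero, Nat.mul_one]
  have h2 : ∀ k ∈ range (j+1), (j+1).choose (2*(k+1)) * catalan (k+1)
      = j.choose (2*k+1) * catalan (k+1) + j.choose (2*(k+1)) * catalan (k+1) := by
    intro k hk
    have : 2*(k+1) = (2*k+1) + 1 := by omega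
    rw [this, Nat.choose_succ_succ', Nat.add_mul]
  rw [Finset.sum_congr rfl h2, Finset.sum_add_distrib]
  omega

lemma catalan_succ_range (s : ℕ) :
    catalan (s+1) = ∑ p ∈ range (s+1), catalan p * catalan (s-p) := by
  rw [catalan_succ]
  exact Fin.sum_univ_eq_sum_range (fun p => catalan p * catalan (s-p)) (s+1)

lemma sum_sq_diag (K : ℕ) (f G : ℕ → ℕ) (hG : ∀ s, K ≤ s → G s = 0) :
    ∑ k ∈ range K, ∑ l ∈ range K, f k * f l * G (k+l)
      = ∑ s ∈ range K, (∑ p ∈ range (s+1), f p * f (s-p)) * G s := by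
  rw [← Finset.sum_product' (s := range K) (t := range K)
    (f := fun k l => f k * f l * G (k+l))]
  have h1 : ∑ x ∈ range K ×ˢ range K, f x.1 * f x.2 * G (x.1 + x.2)
      = ∑ x ∈ (range K ×ˢ range K).filter (fun x => x.1 + x.2 < K),
          f x.1 * f x.2 * G (x.1 + x.2) := by
    refine (Finset.sum_subset (Finset.filter_subset _ _) ?_).symm
    intro x hx hnx
    simp only [Finset.mem_filter, hx, true_and, not_lt] at hnx
    rw [hG _ hnx, Nat.mul_zero]
  rw [h1]
  have h2 : ∑ s ∈ range K, (∑ p ∈ range (s+1), f p * f (s-p)) * G s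
      = ∑ σ ∈ (range K).sigma (fun s => range (s+1)), f σ.2 * f (σ.1 - σ.2) * G σ.1 := by
    rw [Finset.sum_sigma]
    refine Finset.sum_congr rfl fun s _ => ?_
    rw [Finset.sum_mul]
  rw [h2]
  refine Finset.sum_nbij' (fun x => ⟨x.1 + x.2, x.1⟩)
    (fun σ => (σ.2, σ.1 - σ.2)) ?_ ?_ ?_ ?_ ?_
  · intro x hx
    simp only [Finset.mem_filter, Finset.mem_product, mem_range] at hx
    simp only [Finset.mem_sigma, mem_range]
    omega
  · intro σ hσ
    simp only [Finset.mem_sigma, mem_range] at hσ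
    simp only [Finset.mem_filter, Finset.mem_product, mem_range]
    omega
  · intro x hx
    simp only [Finset.mem_filter, Finset.mem_product, mem_range] at hx
    have : x.1 + x.2 - x.1 = x.2 := by omega
    simp only [this]
  · intro σ hσ
    simp only [Finset.mem_sigma, mem_range] at hσ
    have : σ.2 + (σ.1 - σ.2) = σ.1 := by omega
    simp only [this]
  · intro x hx
    simp only [Finset.mem_filter, Finset.mem_product, mem_range] at hx
    simp only
    have : x.1 + x.2 - x.1 = x.2 := by omega
    rw [this, mul_comm (f x.1) (f x.2)]

lemma motzkin_conv (j : ℕ) :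
    ∑ i ∈ range j, motzkin i * motzkin (j-1-i)
      = ∑ k ∈ range (j+1), j.choose (2*k+1) * catalan (k+1) := by
  cases j with
  | zero => simp
  | succ j =>
    have hL : ∀ i ∈ range (j+1), motzkin i * motzkin (j+1-1-i)
        = ∑ k ∈ range (j+2), ∑ l ∈ range (j+2),
            (catalan k * catalan l) * (i.choose (2*k) * (j-i).choose (2*l)) := by
      intro i hi
      simp only [mem_range] at hi
      have e1 : j + 1 - 1 - i = j - i := by omega
      rw [e1, motzkin_eq i (j+2) (by omega), motzkin_eq (j-i) (j+2) (by omega),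
        Finset.sum_mul_sum]
      refine Finset.sum_congr rfl fun k _ => Finset.sum_congr rfl fun l _ => ?_
      ring
    rw [Finset.sum_congr rfl hL]
    rw [Finset.sum_comm]
    have hswap : ∀ k ∈ range (j+2), ∑ i ∈ range (j+1), ∑ l ∈ range (j+2),
          (catalan k * catalan l) * (i.choose (2*k) * (j-i).choose (2*l))
        = ∑ l ∈ range (j+2), catalan k * catalan l * (j+1).choose (2*k+2*l+1) := by
      intro k _
      rw [Finset.sum_comm]
      refine Finset.sum_congr rfl fun l _ => ?_
      rw [← Finset.mul_sum]
      congr 1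
      rw [← choose_conv (2*l) (2*k) j]
    rw [Finset.sum_congr rfl hswap]
    have hdiag := sum_sq_diag (j+2) catalan (fun s => (j+1).choose (2*s+1))
      (fun s hs => Nat.choose_eq_zero_of_lt (by omega))
    have hre : ∀ k ∈ range (j+2), ∑ l ∈ range (j+2),
          catalan k * catalan l * (j+1).choose (2*k+2*l+1)
        = ∑ l ∈ range (j+2), catalan k * catalan l * (j+1).choose (2*(k+l)+1) := by
      intro k _
      refine Finset.sum_congr rfl fun l _ => ?_
      congr 2
      omega
    rw [Finset.sum_congr rfl hre, hdiag]
    refine Finset.sum_congr rfl fun s _ => ?_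
    rw [← catalan_succ_range]
    ring

-- the Motzkin recurrence (F)
lemma motzkin_rec (j : ℕ) :
    motzkin (j+1) = motzkin j + ∑ i ∈ range j, motzkin i * motzkin (j-1-i) := by
  rw [motzkin_succ, motzkin_conv]

/-- Riordan numbers (as integers). -/
def RZ : ℕ → ℤ
  | 0 => 1
  | j+1 => (motzkin j : ℤ) - RZ j

lemma RZ_succ (j : ℕ) : RZ (j+1) = (motzkin j : ℤ) - RZ j := rfl

-- (K2)
lemma motzkin_RZ_conv : ∀ j : ℕ,
    (motzkin j : ℤ) = RZ j + ∑ i ∈ range j, RZ i * (motzkin (j-1-i) : ℤ) := by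
  intro j
  induction j with
  | zero => simp [RZ, motzkin]
  | succ j ih =>
    have hD : ∑ i ∈ range (j+1), RZ i * (motzkin (j-i) : ℤ)
        = (motzkin (j+1) : ℤ) - ∑ i ∈ range j, RZ i * (motzkin (j-1-i) : ℤ) := by
      rw [Finset.sum_range_succ' (fun i => RZ i * (motzkin (j-i) : ℤ)) j]
      have h1 : ∀ i ∈ range j, RZ (i+1) * (motzkin (j-(i+1)) : ℤ)
          = (motzkin i : ℤ) * (motzkin (j-1-i) : ℤ) - RZ i * (motzkin (j-1-i) : ℤ) := by
        intro i hi
        rw [show j - (i+1) = j-1-i from by omega, RZ_succ, sub_mul]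
      rw [Finset.sum_congr rfl h1, Finset.sum_sub_distrib]
      have h2 : (∑ i ∈ range j, (motzkin i : ℤ) * (motzkin (j-1-i) : ℤ))
          = (motzkin (j+1) : ℤ) - (motzkin j : ℤ) := by
        have := motzkin_rec j
        have : (motzkin (j+1) : ℤ)
            = (motzkin j : ℤ) + ∑ i ∈ range j, (motzkin i : ℤ) * (motzkin (j-1-i) : ℤ) := by
          exact_mod_cast congrArg (Nat.cast : ℕ → ℤ) this
        linarith
      rw [h2]
      simp [RZ]
      ring
    have e1 : ∀ i ∈ range (j+1), RZ i * (motzkin (j+1-1-i) : ℤ) = RZ i * (motzkin (j-i) : ℤ) := by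
      intro i hi
      rfl
    rw [Finset.sum_congr rfl e1, hD, RZ_succ]
    linarith

/-- closed form for tree counts -/
def AZ (n m : ℕ) : ℤ :=
  if n = 0 then (if m = 0 then 1 else 0)
  else ((n-1).choose m : ℤ) * (motzkin (n-1-m) : ℤ)

/-- closed form for weighted tree counts -/
def BZ (n m : ℕ) : ℤ := (n.choose m : ℤ) * RZ (n-m)

lemma AZ_succ (n m : ℕ) : AZ (n+1) m = (n.choose m : ℤ) * (motzkin (n-m) : ℤ) := by
  rw [AZ, if_neg (by omega)]
  rfl

-- (S1) arithmetic step for B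
lemma S1_zero (n : ℕ) : AZ (n+1) 0 - BZ n 0 = BZ (n+1) 0 := by
  rw [AZ_succ, BZ, BZ]
  simp [RZ_succ]

lemma S1_succ (n v : ℕ) : AZ (n+1) (v+1) - BZ n (v+1) + BZ n v = BZ (n+1) (v+1) := by
  rw [AZ_succ, BZ, BZ, BZ]
  rcases Nat.lt_or_ge n v with h2 | h2
  · rw [Nat.choose_eq_zero_of_lt h2, Nat.choose_eq_zero_of_lt (by omega : n < v+1),
      Nat.choose_eq_zero_of_lt (by omega : n+1 < v+1)]
    push_cast; ring
  rcases Nat.eq_or_lt_of_le h2 with h3 | h3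
  · subst h3
    simp [RZ]
  · have h : v + 1 ≤ n := by omega
    have h1 : n+1-(v+1) = (n-(v+1)) + 1 := by omega
    have h2' : n - v = (n-(v+1)) + 1 := by omega
    rw [h1, h2', RZ_succ, Nat.choose_succ_succ' (n) (v)]
    push_cast
    ring

-- (G): the main double-sum regrouping
lemma G_lemma (n m : ℕ) :
    ∑ e ∈ range n, ∑ v ∈ range (m+1),
        ((e.choose v : ℤ) * RZ (e-v)) * (((n-1-e).choose (m-v) : ℤ) * (motzkin (n-1-e-(m-v)) : ℤ))
      = (n.choose m : ℤ) * ∑ i ∈ range (n-m), RZ i * (motzkin (n-m-1-i) : ℤ) := by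
  rw [← Finset.sum_product' (s := range n) (t := range (m+1))
    (f := fun e v => ((e.choose v : ℤ) * RZ (e-v)) *
      (((n-1-e).choose (m-v) : ℤ) * (motzkin (n-1-e-(m-v)) : ℤ)))]
  have h1 : ∑ x ∈ range n ×ˢ range (m+1),
        ((x.1.choose x.2 : ℤ) * RZ (x.1-x.2)) *
          (((n-1-x.1).choose (m-x.2) : ℤ) * (motzkin (n-1-x.1-(m-x.2)) : ℤ))
      = ∑ x ∈ (range n ×ˢ range (m+1)).filter
            (fun x => x.2 ≤ x.1 ∧ m - x.2 ≤ n-1-x.1),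
          ((x.1.choose x.2 : ℤ) * RZ (x.1-x.2)) *
            (((n-1-x.1).choose (m-x.2) : ℤ) * (motzkin (n-1-x.1-(m-x.2)) : ℤ)) := by
    refine (Finset.sum_subset (Finset.filter_subset _ _) ?_).symm
    intro x hx hnx
    simp only [Finset.mem_filter, hx, true_and, not_and, not_le] at hnx
    rcases Nat.lt_or_ge x.1 x.2 with hc | hc
    · rw [Nat.choose_eq_zero_of_lt hc]; push_cast; ring
    · have := hnx hc
      rw [Nat.choose_eq_zero_of_lt (show n-1-x.1 < m-x.2 from by omega)]; push_cast; ring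
  rw [h1]
  have h2 : ∑ x ∈ (range n ×ˢ range (m+1)).filter
        (fun x => x.2 ≤ x.1 ∧ m - x.2 ≤ n-1-x.1),
      ((x.1.choose x.2 : ℤ) * RZ (x.1-x.2)) *
        (((n-1-x.1).choose (m-x.2) : ℤ) * (motzkin (n-1-x.1-(m-x.2)) : ℤ))
      = ∑ y ∈ range (n-m) ×ˢ range (m+1),
          (((y.1+y.2).choose y.2 : ℤ) * ((n-1-y.1-y.2).choose (m-y.2) : ℤ)) *
            (RZ y.1 * (motzkin (n-m-1-y.1) : ℤ)) := by
    refine Finset.sum_nbij' (fun x => (x.1 - x.2, x.2)) (fun y => (y.1 + y.2, y.2)) ?_ ?_ ?_ ?_ ?_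
    · intro x hx
      simp only [Finset.mem_filter, Finset.mem_product, mem_range] at hx
      obtain ⟨⟨hx1, hx2⟩, hx3, hx4⟩ := hx
      simp only [Finset.mem_product, mem_range]
      omega
    · intro y hy
      simp only [Finset.mem_product, mem_range] at hy
      simp only [Finset.mem_filter, Finset.mem_product, mem_range]
      omega
    · intro x hx
      simp only [Finset.mem_filter, Finset.mem_product, mem_range] at hx
      have : x.1 - x.2 + x.2 = x.1 := by omega
      simp only [this]
    · intro y hy
      simp only [Finset.mem_product, mem_range] at hy
      have : y.1 + y.2 - y.2 = y.1 := by omega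
      simp only [this]
    · intro x hx
      simp only [Finset.mem_filter, Finset.mem_product, mem_range] at hx
      simp only
      rw [show x.1 - x.2 + x.2 = x.1 from by omega,
        show n-1-(x.1-x.2)-x.2 = n-1-x.1 from by omega,
        show n-m-1-(x.1-x.2) = n-1-x.1-(m-x.2) from by omega]
      ring
  rw [h2, Finset.sum_product' (s := range (n-m)) (t := range (m+1))
    (f := fun i v => (((i+v).choose v : ℤ) * ((n-1-i-v).choose (m-v) : ℤ)) *
      (RZ i * (motzkin (n-m-1-i) : ℤ)))]
  rw [Finset.mul_sum]
  refine Finset.sum_congr rfl fun i hi => ?_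
  simp only [mem_range] at hi
  rw [← Finset.sum_mul]
  congr 1
  have key : ∑ v ∈ range (m+1), ((i+v).choose v : ℤ) * ((n-1-i-v).choose (m-v) : ℤ)
      = ((n.choose m : ℕ) : ℤ) := by
    have hc := choose_conv' i (n-1-m-i) m
    have he : ∀ v ∈ range (m+1), (i+v).choose v * ((n-1-i-v).choose (m-v))
        = (i+v).choose i * (((n-1-m-i)+(m-v)).choose (n-1-m-i)) := by
      intro v hv
      simp only [mem_range] at hv
      congr 1
      · have h := Nat.choose_symm (show i ≤ i+v from by omega)
        rw [show i+v-i = v from by omega] at h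
        exact h
      · have h := Nat.choose_symm (show m-v ≤ n-1-i-v from by omega)
        rw [show n-1-i-v-(m-v) = n-1-m-i from by omega] at h
        rw [show (n-1-m-i)+(m-v) = n-1-i-v from by omega]
        exact h.symm
    have : ∑ v ∈ range (m+1), (i+v).choose v * ((n-1-i-v).choose (m-v))
        = (i+(n-1-m-i)+m+1).choose m := by
      rw [Finset.sum_congr rfl he, hc]
    rw [show i+(n-1-m-i)+m+1 = n from by omega] at this
    exact_mod_cast congrArg (Nat.cast : ℕ → ℤ) this
  rw [key]

-- (S2): full step identity for A
lemma S2 (n m : ℕ) :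
    ∑ e ∈ range (n+1), ∑ v ∈ range (m+1), BZ e v * AZ (n-e) (m-v) = AZ (n+1) m := by
  rw [Finset.sum_range_succ]
  have hlast : ∑ v ∈ range (m+1), BZ n v * AZ (n-n) (m-v) = BZ n m := by
    rw [show n - n = 0 from by omega]
    rw [Finset.sum_eq_single_of_mem m (by simp)]
    · rw [show m - m = 0 from by omega, AZ, if_pos rfl, if_pos rfl, mul_one]
    · intro v hv hvm
      simp only [mem_range] at hv
      rw [AZ, if_pos rfl, if_neg (show ¬(m - v = 0) from by omega), mul_zero]
  rw [hlast]
  have hmain : ∑ e ∈ range n, ∑ v ∈ range (m+1), BZ e v * AZ (n-e) (m-v)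
      = (n.choose m : ℤ) * ∑ i ∈ range (n-m), RZ i * (motzkin (n-m-1-i) : ℤ) := by
    rw [← G_lemma n m]
    refine Finset.sum_congr rfl fun e he => Finset.sum_congr rfl fun v hv => ?_
    simp only [mem_range] at he hv
    rw [BZ, AZ, if_neg (show ¬(n - e = 0) from by omega)]
    rw [show n - e - 1 = n - 1 - e from by omega]
  rw [hmain]
  have hK := motzkin_RZ_conv (n-m)
  have : (n.choose m : ℤ) * ∑ i ∈ range (n-m), RZ i * (motzkin (n-m-1-i) : ℤ)
      = (n.choose m : ℤ) * ((motzkin (n-m) : ℤ) - RZ (n-m)) := by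
    rw [show ((motzkin (n-m) : ℤ) - RZ (n-m)) = ∑ i ∈ range (n-m), RZ i * (motzkin (n-m-1-i) : ℤ)
      from by linarith]
  rw [this, AZ_succ, BZ]
  ring


theorem closed_forms : ∀ n : ℕ, (∀ m, ((aT n m : ℕ) : ℤ) = AZ n m) ∧
    (∀ m, ((bT n m : ℕ) : ℤ) = BZ n m) := by
  intro n
  induction n using Nat.strong_induction_on with
  | _ n ih =>
    match n with
    | 0 =>
      constructor
      · intro m
        rw [aT_zero, AZ, if_pos rfl]
        split_ifs <;> simp
      · intro m
        rw [bT_zero, BZ]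
        rcases Nat.eq_zero_or_pos m with hm | hm
        · subst hm; simp [RZ]
        · rw [if_neg (by omega), Nat.choose_eq_zero_of_lt (by omega)]
          simp
    | n+1 =>
      have ihb : ∀ e, e ≤ n → ∀ v, ((bT e v : ℕ) : ℤ) = BZ e v :=
        fun e he v => (ih e (by omega)).2 v
      have iha : ∀ e, e ≤ n → ∀ v, ((aT e v : ℕ) : ℤ) = AZ e v :=
        fun e he v => (ih e (by omega)).1 v
      have hA : ∀ m, ((aT (n+1) m : ℕ) : ℤ) = AZ (n+1) m := by
        intro m
        rw [aT_succ]
        push_cast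
        rw [← S2 n m]
        refine Finset.sum_congr rfl fun e he => Finset.sum_congr rfl fun v hv => ?_
        simp only [Finset.mem_range] at he hv
        rw [ihb e (by omega) v, iha (n-e) (by omega) (m-v)]
      refine ⟨hA, ?_⟩
      intro v
      have hsplit := bT_split (n+1) v
      have hasplit := aT_split (n+1) v
      cases v with
      | zero =>
        have hc := cT_succ n 0
        have hz : ((bT (n+1) 0 : ℕ) : ℤ) = ((aT (n+1) 0 : ℕ) : ℤ) - ((bT n 0 : ℕ) : ℤ) := by
          rw [if_pos rfl] at hsplit
          omega
        rw [hz, hA 0, ihb n le_rfl 0, S1_zero n]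
      | succ w =>
        have hc1 := cT_succ n (w+1)
        have hc2 := cT_succ n w
        have hz : ((bT (n+1) (w+1) : ℕ) : ℤ) = ((aT (n+1) (w+1) : ℕ) : ℤ)
            - ((bT n (w+1) : ℕ) : ℤ) + ((bT n w : ℕ) : ℤ) := by
          rw [if_neg (by omega)] at hsplit
          simp only [Nat.add_sub_cancel] at hsplit
          omega
        rw [hz, hA (w+1), ihb n le_rfl (w+1), ihb n le_rfl w, S1_succ n w]


/-- For `n > m`, the number of plane trees on `n` edges with exactly `m` internal
nodes equals `C(n-1,m)* M_{n-m-1}`. -/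
theorem planeTree_count_internals (n m : ℕ) (h : m < n) :
    Nat.card {T : PlaneTree // T.edges = n ∧ T.internals = m} =
      Nat.choose (n - 1) m * motzkin (n - m - 1) := by
  have hA := (closed_forms n).1 m
  have h2 : AZ n m = (((n-1).choose m * motzkin (n-1-m) : ℕ) : ℤ) := by
    rw [AZ, if_neg (by omega)]
    push_cast
    ring
  have h3 : aT n m = (n-1).choose m * motzkin (n-1-m) := by
    exact_mod_cast hA.trans h2
  rw [show n - 1 - m = n - m - 1 from by omega] at h3
  exact h3
end

section
/- Let a_1, a_2 be real numbers with min(a_1,a_2) > -1. Then for large n, the sum over pairs of positive integers n_1 + n_2 = n of n_1^{a_1} * n_2^{a_2} is Theta(n^{a_1 + a_2 + 1}), i.e., it is bounded above and below by positive constant multiples of n^{a_1+a_2+1}. -/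
open Filter

private lemma aux_key (a : ℝ) (ha : -1 < a) (ha0 : a < 0) (j : ℕ) :
    (a + 1) * ((j : ℝ) + 1) ^ a ≤ ((j : ℝ) + 1) ^ (a + 1) - (j : ℝ) ^ (a + 1) := by
  have hj0 : (0:ℝ) ≤ (j:ℝ) := Nat.cast_nonneg j
  have ht : (0:ℝ) < (j : ℝ) + 1 := by positivity
  have hs : (-1:ℝ) ≤ -(1 / ((j : ℝ) + 1)) := by
    rw [neg_le_neg_iff]
    exact div_le_one_of_le₀ (by linarith) ht.le
  have hb := rpow_one_add_le_one_add_mul_self hs (by linarith : (0:ℝ) ≤ a + 1)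
    (by linarith : a + 1 ≤ 1)
  have hbase : 1 + -(1 / ((j : ℝ) + 1)) = (j : ℝ) / ((j : ℝ) + 1) := by
    field_simp
    ring
  rw [hbase] at hb
  rw [Real.div_rpow hj0 ht.le] at hb
  have htp : (0:ℝ) < ((j : ℝ) + 1) ^ (a + 1) := Real.rpow_pos_of_pos ht _
  rw [div_le_iff₀ htp] at hb
  have hP : ((j : ℝ) + 1) ^ (a + 1) = ((j : ℝ) + 1) ^ a * ((j : ℝ) + 1) :=
    Real.rpow_add_one ht.ne' a
  rw [hP] at hb ⊢
  have hexp : (1 + (a + 1) * -(1 / ((j : ℝ) + 1))) * (((j : ℝ) + 1) ^ a * ((j : ℝ) + 1))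
      = ((j : ℝ) + 1) ^ a * ((j : ℝ) + 1) - (a + 1) * ((j : ℝ) + 1) ^ a := by
    field_simp
    ring
  rw [hexp] at hb
  linarith

private lemma aux_sum_rpow_le (a : ℝ) (ha : -1 < a) :
    ∃ C : ℝ, 0 < C ∧ ∀ n : ℕ, ∑ i ∈ Finset.Icc 1 n, (i : ℝ) ^ a ≤ C * (n : ℝ) ^ (a + 1) := by
  have hp : 0 < a + 1 := by linarith
  rcases le_or_gt 0 a with ha0 | ha0
  · refine ⟨1, one_pos, fun n => ?_⟩
    rcases Nat.eq_zero_or_pos n with rfl | hn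
    · simp [Real.zero_rpow hp.ne']
    have hn0 : (0:ℝ) < n := by exact_mod_cast hn
    calc ∑ i ∈ Finset.Icc 1 n, (i : ℝ) ^ a ≤ ∑ _i ∈ Finset.Icc 1 n, (n : ℝ) ^ a :=
          Finset.sum_le_sum fun i hi => Real.rpow_le_rpow (Nat.cast_nonneg i)
            (Nat.cast_le.mpr (Finset.mem_Icc.mp hi).2) ha0
      _ = (n : ℝ) * (n : ℝ) ^ a := by
          rw [Finset.sum_const, Nat.card_Icc, nsmul_eq_mul]
          norm_num
      _ = 1 * (n : ℝ) ^ (a + 1) := by rw [Real.rpow_add_one hn0.ne', one_mul]; ring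
  · refine ⟨1 / (a + 1), by positivity, fun n => ?_⟩
    have h1 : ∑ i ∈ Finset.Icc 1 n, (i : ℝ) ^ a = ∑ j ∈ Finset.range n, ((j : ℝ) + 1) ^ a := by
      rw [← Finset.Ico_add_one_right_eq_Icc, Finset.sum_Ico_eq_sum_range]
      refine Finset.sum_congr (by congr 1) fun j _ => by push_cast; rw [add_comm]
    have h2 : ∑ j ∈ Finset.range n, ((a + 1) * ((j : ℝ) + 1) ^ a)
        ≤ ∑ j ∈ Finset.range n, ((((j + 1 : ℕ)) : ℝ) ^ (a + 1) - ((j : ℕ) : ℝ) ^ (a + 1)) := by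
      refine Finset.sum_le_sum fun j _ => ?_
      have h := aux_key a ha ha0 j
      push_cast
      linarith
    have h3 : ∑ j ∈ Finset.range n, ((((j + 1 : ℕ)) : ℝ) ^ (a + 1) - ((j : ℕ) : ℝ) ^ (a + 1))
        = (n : ℝ) ^ (a + 1) := by
      rw [Finset.sum_range_sub (fun k : ℕ => ((k : ℕ) : ℝ) ^ (a + 1))]
      simp [Real.zero_rpow hp.ne']
    have h4 : (a + 1) * ∑ j ∈ Finset.range n, ((j : ℝ) + 1) ^ a ≤ (n : ℝ) ^ (a + 1) := by
      rw [Finset.mul_sum]; exact h2.trans_eq h3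
    rw [h1, one_div, ← div_eq_inv_mul]
    exact (le_div_iff₀' hp).mpr h4

private lemma aux_upper_pt (a : ℝ) {n m : ℝ} (hn : 0 < n) (h1 : n / 2 ≤ m) (h2 : m ≤ n) :
    m ^ a ≤ max 1 ((2:ℝ) ^ (-a)) * n ^ a := by
  have hm : 0 < m := lt_of_lt_of_le (by linarith) h1
  have hna : 0 ≤ n ^ a := (Real.rpow_pos_of_pos hn a).le
  rcases le_or_gt 0 a with hA | hA
  · calc m ^ a ≤ n ^ a := Real.rpow_le_rpow hm.le h2 hA
      _ = 1 * n ^ a := (one_mul _).symm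
      _ ≤ _ := mul_le_mul_of_nonneg_right (le_max_left _ _) hna
  · calc m ^ a ≤ (n / 2) ^ a := Real.rpow_le_rpow_of_nonpos (by linarith) h1 hA.le
      _ = (2:ℝ) ^ (-a) * n ^ a := by
          rw [Real.div_rpow hn.le (by norm_num : (0:ℝ) ≤ 2),
            Real.rpow_neg (by norm_num : (0:ℝ) ≤ 2), div_eq_inv_mul]
      _ ≤ _ := mul_le_mul_of_nonneg_right (le_max_right _ _) hna

private lemma aux_lower_pt (a : ℝ) {n m : ℝ} (hn : 0 < n) (h1 : n / 4 ≤ m) (h2 : m ≤ n) :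
    min 1 ((4:ℝ) ^ (-a)) * n ^ a ≤ m ^ a := by
  have hm : 0 < m := lt_of_lt_of_le (by linarith) h1
  have hna : 0 ≤ n ^ a := (Real.rpow_pos_of_pos hn a).le
  rcases le_or_gt 0 a with hA | hA
  · calc min 1 ((4:ℝ) ^ (-a)) * n ^ a ≤ (4:ℝ) ^ (-a) * n ^ a :=
        mul_le_mul_of_nonneg_right (min_le_right _ _) hna
      _ = (n / 4) ^ a := by
          rw [Real.div_rpow hn.le (by norm_num : (0:ℝ) ≤ 4),
            Real.rpow_neg (by norm_num : (0:ℝ) ≤ 4), div_eq_inv_mul]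
      _ ≤ m ^ a := Real.rpow_le_rpow (by positivity) h1 hA
  · calc min 1 ((4:ℝ) ^ (-a)) * n ^ a ≤ 1 * n ^ a :=
        mul_le_mul_of_nonneg_right (min_le_left _ _) hna
      _ = n ^ a := one_mul _
      _ ≤ m ^ a := Real.rpow_le_rpow_of_nonpos hm h2 hA.le

/-- For `min a₁ a₂ > -1`, `∑_{n₁+n₂=n, n₁,n₂ ≥ 1} n₁^{a₁} n₂^{a₂} = Θ(n^{a₁+a₂+1})`. -/
theorem sum_rpow_mul_rpow_isTheta_of_neg_one_lt (a₁ a₂ : ℝ) (h : -1 < min a₁ a₂) :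
    ∃ c C : ℝ, 0 < c ∧ 0 < C ∧ ∀ᶠ n : ℕ in atTop,
      c * (n : ℝ) ^ (a₁ + a₂ + 1) ≤
          ∑ i ∈ Finset.Ico 1 n, (i : ℝ) ^ a₁ * ((n - i : ℕ) : ℝ) ^ a₂ ∧
        ∑ i ∈ Finset.Ico 1 n, (i : ℝ) ^ a₁ * ((n - i : ℕ) : ℝ) ^ a₂ ≤
          C * (n : ℝ) ^ (a₁ + a₂ + 1) := by
  have ha₁ : -1 < a₁ := lt_of_lt_of_le h (min_le_left _ _)
  have ha₂ : -1 < a₂ := lt_of_lt_of_le h (min_le_right _ _)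
  obtain ⟨C₁, hC₁, hC₁'⟩ := aux_sum_rpow_le a₁ ha₁
  obtain ⟨C₂, hC₂, hC₂'⟩ := aux_sum_rpow_le a₂ ha₂
  have hK₁0 : (0:ℝ) < max 1 ((2:ℝ) ^ (-a₁)) := lt_of_lt_of_le one_pos (le_max_left _ _)
  have hK₂0 : (0:ℝ) < max 1 ((2:ℝ) ^ (-a₂)) := lt_of_lt_of_le one_pos (le_max_left _ _)
  have hc₁0 : (0:ℝ) < min 1 ((4:ℝ) ^ (-a₁)) :=
    lt_min one_pos (Real.rpow_pos_of_pos (by norm_num) _)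
  have hc₂0 : (0:ℝ) < min 1 ((4:ℝ) ^ (-a₂)) :=
    lt_min one_pos (Real.rpow_pos_of_pos (by norm_num) _)
  refine ⟨min 1 ((4:ℝ) ^ (-a₁)) * min 1 ((4:ℝ) ^ (-a₂)) / 8,
    max 1 ((2:ℝ) ^ (-a₂)) * C₁ + max 1 ((2:ℝ) ^ (-a₁)) * C₂, by positivity, by positivity, ?_⟩
  filter_upwards [eventually_ge_atTop 8] with n hn
  have hn0 : 0 < n := by omega
  have hnR : (0:ℝ) < (n:ℝ) := by exact_mod_cast hn0
  constructor
  · -- lower bound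
    have hsub : Finset.Ico (n / 4 + 1) (n / 2 + 1) ⊆ Finset.Ico 1 n := by
      intro i hi
      simp only [Finset.mem_Ico] at *
      omega
    have step2 : ∀ i ∈ Finset.Ico (n / 4 + 1) (n / 2 + 1),
        min 1 ((4:ℝ) ^ (-a₁)) * min 1 ((4:ℝ) ^ (-a₂)) * (n : ℝ) ^ (a₁ + a₂)
          ≤ (i : ℝ) ^ a₁ * ((n - i : ℕ) : ℝ) ^ a₂ := by
      intro i hi
      simp only [Finset.mem_Ico] at hi
      have hi4n : n ≤ 4 * i := by omega
      have h2in : 2 * i ≤ n := by omega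
      have hi4 : (n : ℝ) / 4 ≤ (i : ℝ) := by
        have : (n : ℝ) ≤ 4 * (i : ℝ) := by exact_mod_cast hi4n
        linarith
      have hin : (i : ℝ) ≤ (n : ℝ) := by exact_mod_cast (by omega : i ≤ n)
      have h2i : 2 * (i : ℝ) ≤ (n : ℝ) := by exact_mod_cast h2in
      have him : ((n - i : ℕ) : ℝ) = (n : ℝ) - (i : ℝ) := by
        rw [Nat.cast_sub (by omega : i ≤ n)]
      rw [him]
      have l1 := aux_lower_pt a₁ hnR hi4 hin
      have l2 := aux_lower_pt a₂ (m := (n : ℝ) - (i : ℝ)) hnR (by linarith) (by linarith)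
      calc min 1 ((4:ℝ) ^ (-a₁)) * min 1 ((4:ℝ) ^ (-a₂)) * (n : ℝ) ^ (a₁ + a₂)
          = (min 1 ((4:ℝ) ^ (-a₁)) * (n : ℝ) ^ a₁) * (min 1 ((4:ℝ) ^ (-a₂)) * (n : ℝ) ^ a₂) := by
            rw [Real.rpow_add hnR]; ring
        _ ≤ (i : ℝ) ^ a₁ * ((n : ℝ) - (i : ℝ)) ^ a₂ := by
            refine mul_le_mul l1 l2 (by positivity) ?_
            exact Real.rpow_nonneg (by positivity) _
    have hcardn : n ≤ 8 * (n / 2 + 1 - (n / 4 + 1)) := by omega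
    have hcard : (n : ℝ) / 8 ≤ ((Finset.Ico (n / 4 + 1) (n / 2 + 1)).card : ℝ) := by
      rw [Nat.card_Ico]
      have : (n : ℝ) ≤ 8 * ((n / 2 + 1 - (n / 4 + 1) : ℕ) : ℝ) := by exact_mod_cast hcardn
      linarith
    calc min 1 ((4:ℝ) ^ (-a₁)) * min 1 ((4:ℝ) ^ (-a₂)) / 8 * (n : ℝ) ^ (a₁ + a₂ + 1)
        = ((n : ℝ) / 8) * (min 1 ((4:ℝ) ^ (-a₁)) * min 1 ((4:ℝ) ^ (-a₂)) * (n : ℝ) ^ (a₁ + a₂)) := by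
          rw [Real.rpow_add_one hnR.ne']; ring
      _ ≤ ((Finset.Ico (n / 4 + 1) (n / 2 + 1)).card : ℝ)
            * (min 1 ((4:ℝ) ^ (-a₁)) * min 1 ((4:ℝ) ^ (-a₂)) * (n : ℝ) ^ (a₁ + a₂)) := by
          refine mul_le_mul_of_nonneg_right hcard ?_
          positivity
      _ ≤ ∑ i ∈ Finset.Ico (n / 4 + 1) (n / 2 + 1), (i : ℝ) ^ a₁ * ((n - i : ℕ) : ℝ) ^ a₂ := by
          rw [← nsmul_eq_mul]
          exact Finset.card_nsmul_le_sum _ _ _ step2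
      _ ≤ ∑ i ∈ Finset.Ico 1 n, (i : ℝ) ^ a₁ * ((n - i : ℕ) : ℝ) ^ a₂ := by
          refine Finset.sum_le_sum_of_subset_of_nonneg hsub fun i _ _ => ?_
          positivity
  · -- upper bound
    classical
    rw [← Finset.sum_filter_add_sum_filter_not (Finset.Ico 1 n) (fun i => 2 * i ≤ n)]
    have hA : ∑ i ∈ (Finset.Ico 1 n).filter (fun i => 2 * i ≤ n),
        (i : ℝ) ^ a₁ * ((n - i : ℕ) : ℝ) ^ a₂
        ≤ max 1 ((2:ℝ) ^ (-a₂)) * C₁ * (n : ℝ) ^ (a₁ + a₂ + 1) := by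
      have hbound : ∀ i ∈ (Finset.Ico 1 n).filter (fun i => 2 * i ≤ n),
          (i : ℝ) ^ a₁ * ((n - i : ℕ) : ℝ) ^ a₂
            ≤ (i : ℝ) ^ a₁ * (max 1 ((2:ℝ) ^ (-a₂)) * (n : ℝ) ^ a₂) := by
        intro i hi
        simp only [Finset.mem_filter, Finset.mem_Ico] at hi
        obtain ⟨⟨hi1, hi2⟩, hi3⟩ := hi
        have him : ((n - i : ℕ) : ℝ) = (n : ℝ) - (i : ℝ) := by
          rw [Nat.cast_sub (by omega : i ≤ n)]
        have h2i : 2 * (i : ℝ) ≤ (n : ℝ) := by exact_mod_cast hi3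
        have hi1R : (1:ℝ) ≤ (i : ℝ) := by exact_mod_cast hi1
        rw [him]
        refine mul_le_mul_of_nonneg_left (aux_upper_pt a₂ hnR (by linarith) (by linarith)) ?_
        positivity
      calc ∑ i ∈ (Finset.Ico 1 n).filter (fun i => 2 * i ≤ n),
            (i : ℝ) ^ a₁ * ((n - i : ℕ) : ℝ) ^ a₂
          ≤ ∑ i ∈ (Finset.Ico 1 n).filter (fun i => 2 * i ≤ n),
            (i : ℝ) ^ a₁ * (max 1 ((2:ℝ) ^ (-a₂)) * (n : ℝ) ^ a₂) := Finset.sum_le_sum hbound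
        _ ≤ ∑ i ∈ Finset.Icc 1 n, (i : ℝ) ^ a₁ * (max 1 ((2:ℝ) ^ (-a₂)) * (n : ℝ) ^ a₂) := by
            refine Finset.sum_le_sum_of_subset_of_nonneg ?_ fun i _ _ => by positivity
            intro i hi
            simp only [Finset.mem_filter, Finset.mem_Ico, Finset.mem_Icc] at *
            omega
        _ = (∑ i ∈ Finset.Icc 1 n, (i : ℝ) ^ a₁) * (max 1 ((2:ℝ) ^ (-a₂)) * (n : ℝ) ^ a₂) :=
            (Finset.sum_mul _ _ _).symm
        _ ≤ C₁ * (n : ℝ) ^ (a₁ + 1) * (max 1 ((2:ℝ) ^ (-a₂)) * (n : ℝ) ^ a₂) := by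
            refine mul_le_mul_of_nonneg_right (hC₁' n) ?_
            positivity
        _ = max 1 ((2:ℝ) ^ (-a₂)) * C₁ * ((n : ℝ) ^ (a₁ + 1) * (n : ℝ) ^ a₂) := by ring
        _ = max 1 ((2:ℝ) ^ (-a₂)) * C₁ * (n : ℝ) ^ (a₁ + a₂ + 1) := by
            rw [← Real.rpow_add hnR, show a₁ + 1 + a₂ = a₁ + a₂ + 1 by ring]
    have hB : ∑ i ∈ (Finset.Ico 1 n).filter (fun i => ¬ 2 * i ≤ n),
        (i : ℝ) ^ a₁ * ((n - i : ℕ) : ℝ) ^ a₂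
        ≤ max 1 ((2:ℝ) ^ (-a₁)) * C₂ * (n : ℝ) ^ (a₁ + a₂ + 1) := by
      have hbound : ∀ i ∈ (Finset.Ico 1 n).filter (fun i => ¬ 2 * i ≤ n),
          (i : ℝ) ^ a₁ * ((n - i : ℕ) : ℝ) ^ a₂
            ≤ (max 1 ((2:ℝ) ^ (-a₁)) * (n : ℝ) ^ a₁) * ((n - i : ℕ) : ℝ) ^ a₂ := by
        intro i hi
        simp only [Finset.mem_filter, Finset.mem_Ico, not_le] at hi
        obtain ⟨⟨hi1, hi2⟩, hi3⟩ := hi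
        have h2i : (n : ℝ) ≤ 2 * (i : ℝ) := by exact_mod_cast hi3.le
        have hiR : (i : ℝ) ≤ (n : ℝ) := by exact_mod_cast hi2.le
        refine mul_le_mul_of_nonneg_right (aux_upper_pt a₁ hnR (by linarith) hiR) ?_
        exact Real.rpow_nonneg (Nat.cast_nonneg _) _
      calc ∑ i ∈ (Finset.Ico 1 n).filter (fun i => ¬ 2 * i ≤ n),
            (i : ℝ) ^ a₁ * ((n - i : ℕ) : ℝ) ^ a₂
          ≤ ∑ i ∈ (Finset.Ico 1 n).filter (fun i => ¬ 2 * i ≤ n),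
            (max 1 ((2:ℝ) ^ (-a₁)) * (n : ℝ) ^ a₁) * ((n - i : ℕ) : ℝ) ^ a₂ :=
            Finset.sum_le_sum hbound
        _ = (max 1 ((2:ℝ) ^ (-a₁)) * (n : ℝ) ^ a₁)
              * ∑ i ∈ (Finset.Ico 1 n).filter (fun i => ¬ 2 * i ≤ n), ((n - i : ℕ) : ℝ) ^ a₂ := by
            rw [Finset.mul_sum]
        _ ≤ (max 1 ((2:ℝ) ^ (-a₁)) * (n : ℝ) ^ a₁) * ∑ j ∈ Finset.Icc 1 n, (j : ℝ) ^ a₂ := by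
            refine mul_le_mul_of_nonneg_left ?_ (by positivity)
            have himg : ∑ i ∈ (Finset.Ico 1 n).filter (fun i => ¬ 2 * i ≤ n),
                ((n - i : ℕ) : ℝ) ^ a₂
                = ∑ j ∈ ((Finset.Ico 1 n).filter (fun i => ¬ 2 * i ≤ n)).image (fun i => n - i),
                    (j : ℝ) ^ a₂ := by
              rw [Finset.sum_image]
              intro x hx y hy hxy
              simp only [Finset.coe_filter, Finset.mem_coe, Finset.mem_filter, Finset.mem_Ico, Set.mem_setOf_eq] at hx hy hxy
              omega
            rw [himg]
            refine Finset.sum_le_sum_of_subset_of_nonneg ?_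
              (fun j _ _ => Real.rpow_nonneg (Nat.cast_nonneg _) _)
            intro j hj
            simp only [Finset.mem_image, Finset.mem_filter, Finset.mem_Ico, Finset.mem_Icc] at *
            obtain ⟨i, ⟨⟨h1, h2⟩, h3⟩, rfl⟩ := hj
            omega
        _ ≤ (max 1 ((2:ℝ) ^ (-a₁)) * (n : ℝ) ^ a₁) * (C₂ * (n : ℝ) ^ (a₂ + 1)) := by
            refine mul_le_mul_of_nonneg_left (hC₂' n) ?_
            positivity
        _ = max 1 ((2:ℝ) ^ (-a₁)) * C₂ * ((n : ℝ) ^ a₁ * (n : ℝ) ^ (a₂ + 1)) := by ring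
        _ = max 1 ((2:ℝ) ^ (-a₁)) * C₂ * (n : ℝ) ^ (a₁ + a₂ + 1) := by
            rw [← Real.rpow_add hnR, show a₁ + (a₂ + 1) = a₁ + a₂ + 1 by ring]
    calc _ ≤ max 1 ((2:ℝ) ^ (-a₂)) * C₁ * (n : ℝ) ^ (a₁ + a₂ + 1)
          + max 1 ((2:ℝ) ^ (-a₁)) * C₂ * (n : ℝ) ^ (a₁ + a₂ + 1) := add_le_add hA hB
      _ = (max 1 ((2:ℝ) ^ (-a₂)) * C₁ + max 1 ((2:ℝ) ^ (-a₁)) * C₂) * (n : ℝ) ^ (a₁ + a₂ + 1) := by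
          ring
end

section
/- Let a_1, a_2 be real numbers with min(a_1,a_2) < -1. Then for large n, the sum over pairs of positive integers n_1 + n_2 = n of n_1^{a_1} * n_2^{a_2} is Theta(n^{max(a_1,a_2)}). -/
open Filter Real


lemma L0 (c : ℝ) (hc1 : -1 < c) (hc0 : c < 0) (n : ℕ) (hn : 1 ≤ n) :
    ∑ i ∈ Finset.Ico 1 n, (i : ℝ) ^ c ≤ (1 + 1 / (c + 1)) * (n : ℝ) ^ (c + 1) := by
  have hc1' : 0 < c + 1 := by linarith
  have hnR : (1:ℝ) ≤ (n:ℝ) := by exact_mod_cast hn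
  have hone : (1:ℝ) ≤ (n:ℝ) ^ (c + 1) := Real.one_le_rpow hnR hc1'.le
  rcases Nat.lt_or_ge n 2 with h2 | h2
  · interval_cases n
    · simp
      positivity
  · -- n ≥ 2
    have key : ∑ i ∈ Finset.Ico 2 n, (i : ℝ) ^ c ≤ (n:ℝ) ^ (c+1) / (c+1) := by
      have hre : ∑ i ∈ Finset.Ico 2 n, (i : ℝ) ^ c
          = ∑ i ∈ Finset.Ico 1 (n-1), ((i+1 : ℕ) : ℝ) ^ c := by
        refine Finset.sum_nbij' (fun i => i - 1) (fun i => i + 1) ?_ ?_ ?_ ?_ ?_ <;>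
          intro a ha <;> simp only [Finset.mem_Ico] at * <;> try omega
        congr 1
        push_cast [Nat.sub_add_cancel (by omega : 1 ≤ a)]
        ring
      have hanti : AntitoneOn (fun x : ℝ => x ^ c) (Set.Icc ((1:ℕ):ℝ) ((n-1:ℕ):ℝ)) := by
        intro x hx y hy hxy
        exact Real.rpow_le_rpow_of_nonpos (by simpa using hx.1.trans_lt' (by norm_num)) hxy hc0.le
      have hint := AntitoneOn.sum_le_integral_Ico (by omega : 1 ≤ n - 1) hanti
      rw [hre]
      refine hint.trans ?_
      rw [integral_rpow (Or.inl hc1)]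
      have h1 : ((1:ℕ):ℝ) ^ (c+1) = 1 := by norm_num
      have h2' : ((n-1:ℕ):ℝ) ^ (c+1) ≤ (n:ℝ) ^ (c+1) := by
        apply Real.rpow_le_rpow (by positivity) (by exact_mod_cast Nat.sub_le n 1) hc1'.le
      rw [h1]
      exact (div_le_div_iff_of_pos_right hc1').mpr (by linarith)
    have hsplit : ∑ i ∈ Finset.Ico 1 n, (i : ℝ) ^ c
        = ((1:ℕ):ℝ) ^ c + ∑ i ∈ Finset.Ico 2 n, (i : ℝ) ^ c :=
      Finset.sum_eq_sum_Ico_succ_bot (by omega) _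
    rw [hsplit]
    have : ((1:ℕ):ℝ) ^ c = 1 := by norm_num
    rw [this]
    have : (1 + 1/(c+1)) * (n:ℝ)^(c+1) = (n:ℝ)^(c+1) + (n:ℝ)^(c+1)/(c+1) := by ring
    rw [this]
    have h3 : (n:ℝ)^(c+1) - 1 ≥ 0 := by linarith
    gcongr


lemma L1 (a b : ℝ) (hab : a + 1 < b) (hb : 0 ≤ b) :
    ∃ D : ℝ, 0 < D ∧ ∀ n : ℕ, 1 ≤ n → ∑ i ∈ Finset.Ico 1 n, (i : ℝ) ^ a ≤ D * (n : ℝ) ^ b := by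
  rcases lt_or_ge a (-1) with ha | ha
  · -- a < -1 : bounded partial sums
    have hsum : Summable (fun i : ℕ => (i:ℝ) ^ a) := Real.summable_nat_rpow.mpr ha
    refine ⟨max 1 (∑' i : ℕ, (i:ℝ) ^ a), lt_of_lt_of_le one_pos (le_max_left _ _), ?_⟩
    intro n hn
    have h1 : ∑ i ∈ Finset.Ico 1 n, (i : ℝ) ^ a ≤ ∑' i : ℕ, (i:ℝ) ^ a :=
      Summable.sum_le_tsum _ (fun i _ => Real.rpow_nonneg (Nat.cast_nonneg i) a) hsum
    have h2 : (1:ℝ) ≤ (n:ℝ) ^ b := Real.one_le_rpow (by exact_mod_cast hn) hb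
    calc ∑ i ∈ Finset.Ico 1 n, (i : ℝ) ^ a ≤ ∑' i : ℕ, (i:ℝ) ^ a := h1
      _ ≤ max 1 (∑' i : ℕ, (i:ℝ) ^ a) := le_max_right _ _
      _ = max 1 (∑' i : ℕ, (i:ℝ) ^ a) * 1 := (mul_one _).symm
      _ ≤ max 1 (∑' i : ℕ, (i:ℝ) ^ a) * (n:ℝ) ^ b :=
          mul_le_mul_of_nonneg_left h2 (le_trans one_pos.le (le_max_left _ _))
  · -- -1 ≤ a
    set a' := (a + b - 1) / 2 with ha'def
    have haa' : a < a' := by simp only [ha'def]; linarith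
    have ha' : -1 < a' := lt_of_le_of_lt ha haa'
    have ha'b : a' + 1 ≤ b := by simp only [ha'def]; linarith
    have hstep : ∀ n : ℕ, ∑ i ∈ Finset.Ico 1 n, (i : ℝ) ^ a
        ≤ ∑ i ∈ Finset.Ico 1 n, (i : ℝ) ^ a' := by
      intro n
      apply Finset.sum_le_sum
      intro i hi
      have : (1:ℝ) ≤ (i:ℝ) := by exact_mod_cast (Finset.mem_Ico.mp hi).1
      exact Real.rpow_le_rpow_of_exponent_le this haa'.le
    rcases lt_or_ge a' 0 with ha0 | ha0
    · refine ⟨1 + 1/(a'+1), add_pos one_pos (one_div_pos.mpr (by linarith)), fun n hn => ?_⟩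
      have hnR : (1:ℝ) ≤ (n:ℝ) := by exact_mod_cast hn
      refine (hstep n).trans ((L0 a' ha' ha0 n hn).trans ?_)
      exact mul_le_mul_of_nonneg_left
        (Real.rpow_le_rpow_of_exponent_le hnR (by linarith))
        (add_pos one_pos (one_div_pos.mpr (by linarith))).le
    · refine ⟨1, one_pos, fun n hn => ?_⟩
      have hnR : (1:ℝ) ≤ (n:ℝ) := by exact_mod_cast hn
      refine (hstep n).trans ?_
      rw [one_mul]
      calc ∑ i ∈ Finset.Ico 1 n, (i : ℝ) ^ a'
          ≤ ∑ _i ∈ Finset.Ico 1 n, (n : ℝ) ^ a' := by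
            apply Finset.sum_le_sum
            intro i hi
            have hi' := Finset.mem_Ico.mp hi
            exact Real.rpow_le_rpow (Nat.cast_nonneg i)
              (by exact_mod_cast hi'.2.le) ha0
        _ = (n - 1 : ℕ) * (n : ℝ) ^ a' := by
            rw [Finset.sum_const, Nat.card_Ico, nsmul_eq_mul]
        _ ≤ (n : ℝ) * (n : ℝ) ^ a' :=
            mul_le_mul_of_nonneg_right (by exact_mod_cast Nat.sub_le n 1)
              (Real.rpow_nonneg (Nat.cast_nonneg n) a')
        _ = (n : ℝ) ^ (1 + a') := by
            rw [Real.rpow_add (by linarith : (0:ℝ) < n), Real.rpow_one]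
        _ ≤ (n : ℝ) ^ b := Real.rpow_le_rpow_of_exponent_le hnR (by linarith)
lemma L2 (a₁ a₂ : ℝ) (h2 : a₂ < -1) (h12 : a₂ ≤ a₁) :
    ∃ c C : ℝ, 0 < c ∧ 0 < C ∧ ∀ n : ℕ, 2 ≤ n →
      c * (n : ℝ) ^ a₁ ≤ ∑ i ∈ Finset.Ico 1 n, (i : ℝ) ^ a₁ * ((n - i : ℕ) : ℝ) ^ a₂ ∧
      ∑ i ∈ Finset.Ico 1 n, (i : ℝ) ^ a₁ * ((n - i : ℕ) : ℝ) ^ a₂ ≤ C * (n : ℝ) ^ a₁ := by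
  obtain ⟨D, hD, hDle⟩ := L1 a₁ (a₁ - a₂) (by linarith) (by linarith)
  have hsum2 : Summable (fun i : ℕ => (i:ℝ) ^ a₂) := Real.summable_nat_rpow.mpr h2
  set Z := ∑' i : ℕ, (i:ℝ) ^ a₂ with hZdef
  have hZ0 : 0 ≤ Z := tsum_nonneg fun i => Real.rpow_nonneg (Nat.cast_nonneg i) a₂
  set K := max 1 ((2:ℝ) ^ (-a₁)) with hKdef
  have hK0 : (0:ℝ) < K := lt_of_lt_of_le one_pos (le_max_left _ _)
  refine ⟨min 1 ((2:ℝ) ^ (-a₁)), (2:ℝ) ^ (-a₂) * D + K * max 1 Z,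
    lt_min one_pos (Real.rpow_pos_of_pos two_pos _),
    by positivity, fun n hn => ?_⟩
  have hn0 : (0:ℝ) < (n:ℝ) := by positivity
  have hn1 : (1:ℝ) ≤ (n:ℝ) := by exact_mod_cast (by omega : 1 ≤ n)
  have hterm_nonneg : ∀ i ∈ Finset.Ico 1 n,
      0 ≤ (i : ℝ) ^ a₁ * ((n - i : ℕ) : ℝ) ^ a₂ := fun i _ =>
    mul_nonneg (Real.rpow_nonneg (Nat.cast_nonneg i) a₁)
      (Real.rpow_nonneg (Nat.cast_nonneg _) a₂)
  constructor
  · -- lower bound: single term at i = n - 1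
    have hmem : n - 1 ∈ Finset.Ico 1 n := by simp [Finset.mem_Ico]; omega
    have hterm : ((n-1:ℕ):ℝ) ^ a₁ * ((n - (n-1) : ℕ) : ℝ) ^ a₂ = ((n-1:ℕ):ℝ) ^ a₁ := by
      have : n - (n-1) = 1 := by omega
      rw [this]; norm_num
    have hle := Finset.single_le_sum hterm_nonneg hmem
    rw [hterm] at hle
    refine le_trans ?_ hle
    rcases le_or_gt 0 a₁ with ha | ha
    · calc min 1 ((2:ℝ) ^ (-a₁)) * (n:ℝ) ^ a₁ ≤ (2:ℝ)^(-a₁) * (n:ℝ) ^ a₁ :=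
            mul_le_mul_of_nonneg_right (min_le_right _ _) (Real.rpow_nonneg hn0.le _)
        _ = ((n:ℝ)/2) ^ a₁ := by
            rw [Real.div_rpow hn0.le two_pos.le, Real.rpow_neg two_pos.le,
              div_eq_mul_inv, mul_comm]
        _ ≤ ((n-1:ℕ):ℝ) ^ a₁ := by
            apply Real.rpow_le_rpow (by positivity) ?_ ha
            rw [Nat.cast_sub (by omega)]
            push_cast
            have : (2:ℝ) ≤ n := by exact_mod_cast hn
            linarith
    · calc min 1 ((2:ℝ) ^ (-a₁)) * (n:ℝ) ^ a₁ ≤ 1 * (n:ℝ) ^ a₁ :=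
            mul_le_mul_of_nonneg_right (min_le_left _ _) (Real.rpow_nonneg hn0.le _)
        _ = (n:ℝ) ^ a₁ := one_mul _
        _ ≤ ((n-1:ℕ):ℝ) ^ a₁ := by
            apply Real.rpow_le_rpow_of_nonpos ?_ ?_ ha.le
            · rw [Nat.cast_sub (by omega)]
              have : (2:ℝ) ≤ n := by exact_mod_cast hn
              push_cast; linarith
            · exact_mod_cast Nat.sub_le n 1
  · -- upper bound
    classical
    rw [← Finset.sum_filter_add_sum_filter_not (Finset.Ico 1 n) (fun i => 2*i ≤ n)]
    have hA : ∑ i ∈ (Finset.Ico 1 n).filter (fun i => 2*i ≤ n),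
        (i : ℝ) ^ a₁ * ((n - i : ℕ) : ℝ) ^ a₂ ≤ (2:ℝ)^(-a₂) * D * (n:ℝ) ^ a₁ := by
      have hstep : ∀ i ∈ (Finset.Ico 1 n).filter (fun i => 2*i ≤ n),
          (i : ℝ) ^ a₁ * ((n - i : ℕ) : ℝ) ^ a₂ ≤ (i : ℝ) ^ a₁ * ((2:ℝ)^(-a₂) * (n:ℝ)^a₂) := by
        intro i hi
        simp only [Finset.mem_filter, Finset.mem_Ico] at hi
        apply mul_le_mul_of_nonneg_left ?_ (Real.rpow_nonneg (Nat.cast_nonneg i) a₁)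
        have hcast : ((n - i : ℕ) : ℝ) = (n:ℝ) - (i:ℝ) := by
          rw [Nat.cast_sub (by omega)]
        have h2i : 2 * (i:ℝ) ≤ (n:ℝ) := by exact_mod_cast hi.2
        calc ((n - i : ℕ) : ℝ) ^ a₂ ≤ ((n:ℝ)/2) ^ a₂ := by
              apply Real.rpow_le_rpow_of_nonpos (by positivity) ?_ (by linarith : a₂ ≤ 0)
              rw [hcast]; linarith
          _ = (2:ℝ)^(-a₂) * (n:ℝ)^a₂ := by
              rw [Real.div_rpow hn0.le two_pos.le, Real.rpow_neg two_pos.le,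
                div_eq_mul_inv, mul_comm]
      calc ∑ i ∈ (Finset.Ico 1 n).filter (fun i => 2*i ≤ n),
            (i : ℝ) ^ a₁ * ((n - i : ℕ) : ℝ) ^ a₂
          ≤ ∑ i ∈ (Finset.Ico 1 n).filter (fun i => 2*i ≤ n),
            (i : ℝ) ^ a₁ * ((2:ℝ)^(-a₂) * (n:ℝ)^a₂) := Finset.sum_le_sum hstep
        _ = ((2:ℝ)^(-a₂) * (n:ℝ)^a₂) * ∑ i ∈ (Finset.Ico 1 n).filter (fun i => 2*i ≤ n),
            (i : ℝ) ^ a₁ := by rw [← Finset.sum_mul]; ring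
        _ ≤ ((2:ℝ)^(-a₂) * (n:ℝ)^a₂) * ∑ i ∈ Finset.Ico 1 n, (i : ℝ) ^ a₁ := by
            apply mul_le_mul_of_nonneg_left ?_ (by positivity)
            exact Finset.sum_le_sum_of_subset_of_nonneg (Finset.filter_subset _ _)
              (fun i _ _ => Real.rpow_nonneg (Nat.cast_nonneg i) a₁)
        _ ≤ ((2:ℝ)^(-a₂) * (n:ℝ)^a₂) * (D * (n:ℝ)^(a₁ - a₂)) := by
            apply mul_le_mul_of_nonneg_left (hDle n (by omega)) (by positivity)
        _ = (2:ℝ)^(-a₂) * D * ((n:ℝ)^a₂ * (n:ℝ)^(a₁ - a₂)) := by ring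
        _ = (2:ℝ)^(-a₂) * D * (n:ℝ) ^ a₁ := by
            rw [← Real.rpow_add hn0]; ring_nf
    have hB : ∑ i ∈ (Finset.Ico 1 n).filter (fun i => ¬ 2*i ≤ n),
        (i : ℝ) ^ a₁ * ((n - i : ℕ) : ℝ) ^ a₂ ≤ K * max 1 Z * (n:ℝ) ^ a₁ := by
      have hstep : ∀ i ∈ (Finset.Ico 1 n).filter (fun i => ¬ 2*i ≤ n),
          (i : ℝ) ^ a₁ * ((n - i : ℕ) : ℝ) ^ a₂
            ≤ (K * (n:ℝ)^a₁) * ((n - i : ℕ) : ℝ) ^ a₂ := by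
        intro i hi
        simp only [Finset.mem_filter, Finset.mem_Ico, not_le] at hi
        apply mul_le_mul_of_nonneg_right ?_ (Real.rpow_nonneg (Nat.cast_nonneg _) a₂)
        have h2i : (n:ℝ) < 2 * (i:ℝ) := by exact_mod_cast hi.2
        rcases le_or_gt 0 a₁ with ha | ha
        · calc (i:ℝ) ^ a₁ ≤ (n:ℝ) ^ a₁ :=
                Real.rpow_le_rpow (Nat.cast_nonneg i) (by exact_mod_cast hi.1.2.le) ha
            _ ≤ K * (n:ℝ)^a₁ := by
                apply le_mul_of_one_le_left (Real.rpow_nonneg hn0.le _) (le_max_left _ _)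
        · have e1 : (i:ℝ) ^ a₁ ≤ ((n:ℝ)/2) ^ a₁ :=
            Real.rpow_le_rpow_of_nonpos (by positivity) (by linarith) ha.le
          have e2 : ((n:ℝ)/2) ^ a₁ = (2:ℝ)^(-a₁) * (n:ℝ)^a₁ := by
            rw [Real.div_rpow hn0.le two_pos.le, Real.rpow_neg two_pos.le,
              div_eq_mul_inv, mul_comm]
          have e3 : (2:ℝ)^(-a₁) * (n:ℝ)^a₁ ≤ K * (n:ℝ)^a₁ :=
            mul_le_mul_of_nonneg_right (le_max_right _ _) (Real.rpow_nonneg hn0.le _)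
          linarith
      have htail : ∑ i ∈ (Finset.Ico 1 n).filter (fun i => ¬ 2*i ≤ n),
          ((n - i : ℕ) : ℝ) ^ a₂ ≤ Z := by
        have hinj : ∀ x ∈ (Finset.Ico 1 n).filter (fun i => ¬ 2*i ≤ n),
            ∀ y ∈ (Finset.Ico 1 n).filter (fun i => ¬ 2*i ≤ n), n - x = n - y → x = y := by
          intro x hx y hy hxy
          simp only [Finset.mem_filter, Finset.mem_Ico] at hx hy
          omega
        calc ∑ i ∈ (Finset.Ico 1 n).filter (fun i => ¬ 2*i ≤ n), ((n - i : ℕ) : ℝ) ^ a₂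
            = ∑ j ∈ ((Finset.Ico 1 n).filter (fun i => ¬ 2*i ≤ n)).image (fun i => n - i),
              (j : ℝ) ^ a₂ := (Finset.sum_image (f := fun j : ℕ => (j:ℝ)^a₂) hinj).symm
          _ ≤ Z := Summable.sum_le_tsum _ (fun i _ => Real.rpow_nonneg (Nat.cast_nonneg i) a₂) hsum2
      calc ∑ i ∈ (Finset.Ico 1 n).filter (fun i => ¬ 2*i ≤ n),
            (i : ℝ) ^ a₁ * ((n - i : ℕ) : ℝ) ^ a₂
          ≤ ∑ i ∈ (Finset.Ico 1 n).filter (fun i => ¬ 2*i ≤ n),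
            (K * (n:ℝ)^a₁) * ((n - i : ℕ) : ℝ) ^ a₂ := Finset.sum_le_sum hstep
        _ = (K * (n:ℝ)^a₁) * ∑ i ∈ (Finset.Ico 1 n).filter (fun i => ¬ 2*i ≤ n),
            ((n - i : ℕ) : ℝ) ^ a₂ := by rw [Finset.mul_sum]
        _ ≤ (K * (n:ℝ)^a₁) * Z := by
            apply mul_le_mul_of_nonneg_left htail (by positivity)
        _ ≤ K * max 1 Z * (n:ℝ) ^ a₁ := by
            have : (K * (n:ℝ)^a₁) * Z ≤ (K * (n:ℝ)^a₁) * max 1 Z :=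
              mul_le_mul_of_nonneg_left (le_max_right _ _) (by positivity)
            calc (K * (n:ℝ)^a₁) * Z ≤ (K * (n:ℝ)^a₁) * max 1 Z := this
              _ = K * max 1 Z * (n:ℝ) ^ a₁ := by ring
    refine le_trans (add_le_add hA hB) (le_of_eq (by ring))
/-- For `min a₁ a₂ < -1`, `∑_{n₁+n₂=n, n₁,n₂ ≥ 1} n₁^{a₁} n₂^{a₂} = Θ(n^{max a₁ a₂})`. -/
theorem sum_rpow_mul_rpow_isTheta_of_lt_neg_one (a₁ a₂ : ℝ) (h : min a₁ a₂ < -1) :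
    ∃ c C : ℝ, 0 < c ∧ 0 < C ∧ ∀ᶠ n : ℕ in atTop,
      c * (n : ℝ) ^ (max a₁ a₂) ≤
          ∑ i ∈ Finset.Ico 1 n, (i : ℝ) ^ a₁ * ((n - i : ℕ) : ℝ) ^ a₂ ∧
        ∑ i ∈ Finset.Ico 1 n, (i : ℝ) ^ a₁ * ((n - i : ℕ) : ℝ) ^ a₂ ≤
          C * (n : ℝ) ^ (max a₁ a₂) := by
  rcases le_total a₂ a₁ with h12 | h21
  · have hmin : min a₁ a₂ = a₂ := min_eq_right h12
    have hmax : max a₁ a₂ = a₁ := max_eq_left h12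
    rw [hmin] at h
    obtain ⟨c, C, hc, hC, hbound⟩ := L2 a₁ a₂ h h12
    exact ⟨c, C, hc, hC, Filter.eventually_atTop.mpr
      ⟨2, fun n hn => by rw [hmax]; exact hbound n hn⟩⟩
  · have hmin : min a₁ a₂ = a₁ := min_eq_left h21
    have hmax : max a₁ a₂ = a₂ := max_eq_right h21
    rw [hmin] at h
    obtain ⟨c, C, hc, hC, hbound⟩ := L2 a₂ a₁ h h21
    refine ⟨c, C, hc, hC, Filter.eventually_atTop.mpr ⟨2, fun n hn => ?_⟩⟩
    have hswap : ∑ i ∈ Finset.Ico 1 n, (i : ℝ) ^ a₁ * ((n - i : ℕ) : ℝ) ^ a₂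
        = ∑ i ∈ Finset.Ico 1 n, (i : ℝ) ^ a₂ * ((n - i : ℕ) : ℝ) ^ a₁ := by
      refine Finset.sum_nbij' (fun i => n - i) (fun i => n - i) ?_ ?_ ?_ ?_ ?_ <;>
        intro a ha <;> simp only [Finset.mem_Ico] at * <;> try omega
      have h1 : n - (n - a) = a := by omega
      rw [h1]; ring
    rw [hmax, hswap]
    exact hbound n hn
end

section
/- For any sequence p of m open parentheses and n close parentheses with m > n, among the distinct cyclic permutations of p, the proportion of dominating sequences (sequences in which every nonempty prefix contains strictly more open than close parentheses) is exactly (m-n)/(m+n). -/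
/-- A parenthesis sequence (`true` = open, `false` = close) is dominating if every
nonempty prefix contains strictly more open than close parentheses. -/
def Dominating (q : List Bool) : Prop :=
  ∀ k ∈ Finset.Icc 1 q.length, (q.take k).count false < (q.take k).count true

instance : DecidablePred Dominating := fun q =>
  inferInstanceAs (Decidable (∀ k ∈ Finset.Icc 1 q.length, _ < _))

/-- Prefix sums of the periodic extension of `p`, with `true ↦ +1`, `false ↦ -1`. -/
def psum (p : List Bool) : ℕ → ℤ := fun t =>
  ∑ j ∈ Finset.range t, (if p.getD (j % p.length) false = true then (1 : ℤ) else -1)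

lemma psum_step (p : List Bool) (t : ℕ) :
    psum p (t + 1) = psum p t + (if p.getD (t % p.length) false = true then (1 : ℤ) else -1) := by
  simp [psum, Finset.sum_range_succ]

lemma psum_pm (p : List Bool) (t : ℕ) :
    psum p (t + 1) = psum p t + 1 ∨ psum p (t + 1) = psum p t - 1 := by
  rw [psum_step]
  split_ifs
  · left; ring
  · right; ring

lemma sum_ite_count (l : List Bool) :
    ∑ j ∈ Finset.range l.length, (if l.getD j false = true then (1 : ℤ) else -1)
      = (l.count true : ℤ) - l.count false := by
  induction l with
  | nil => simp
  | cons a l ih =>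
    rw [List.length_cons, Finset.sum_range_succ']
    simp only [List.getD_cons_succ, List.getD_cons_zero, ih, List.count_cons]
    cases a <;> simp <;> ring

lemma psum_length (p : List Bool) :
    psum p p.length = (p.count true : ℤ) - p.count false := by
  rw [psum, ← sum_ite_count p]
  exact Finset.sum_congr rfl fun j hj => by
    rw [Nat.mod_eq_of_lt (Finset.mem_range.mp hj)]

lemma psum_per (p : List Bool) (t : ℕ) :
    psum p (t + p.length) = psum p t + ((p.count true : ℤ) - p.count false) := by
  induction t with
  | zero =>
    rw [zero_add, psum_length, show psum p 0 = 0 from by simp [psum]]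
    ring
  | succ t ih =>
    have h1 : t + 1 + p.length = (t + p.length) + 1 := by omega
    rw [h1, psum_step, ih, psum_step]
    have h2 : (t + p.length) % p.length = t % p.length := Nat.add_mod_right t p.length
    rw [h2]; ring

/-- Relation between counts in prefixes of rotations and the periodic prefix sums. -/
lemma count_take (p : List Bool) (hL : 0 < p.length) (i k : ℕ) (hk : k ≤ p.length) :
    (((p.rotate i).take k).count true : ℤ) - ((p.rotate i).take k).count false
      = psum p (i + k) - psum p i := by
  induction k with
  | zero => simp
  | succ k ih =>
    have hk' : k ≤ p.length := by omega
    have hklt : k < (p.rotate i).length := by rw [List.length_rotate]; omega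
    have hmod : (k + i) % p.length < p.length := Nat.mod_lt _ hL
    rw [List.take_succ, List.getElem?_eq_getElem hklt]
    have hrot : (p.rotate i)[k]'hklt = p[(k + i) % p.length]'hmod :=
      List.getElem_rotate p i k hklt
    have hadd : i + (k + 1) = (i + k) + 1 := by omega
    rw [hadd, psum_step, hrot]
    have hgd : p.getD ((i + k) % p.length) false = p[(k + i) % p.length]'hmod := by
      rw [show i + k = k + i by omega]
      exact List.getD_eq_getElem p false hmod
    rw [hgd]
    rcases hb : p[(k + i) % p.length]'hmod with _ | _ <;>
      simp [List.count_append, hb] <;> linarith [ih hk']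

/-- A rotation is dominating iff the prefix sums strictly increase over one period. -/
lemma dom_iff (p : List Bool) (hL : 0 < p.length) (i : ℕ) :
    Dominating (p.rotate i) ↔ ∀ k, 1 ≤ k → k ≤ p.length → psum p i < psum p (i + k) := by
  unfold Dominating
  rw [List.length_rotate]
  constructor
  · intro h k h1 h2
    have := h k (Finset.mem_Icc.mpr ⟨h1, h2⟩)
    have hct := count_take p hL i k h2
    have : (((p.rotate i).take k).count false : ℤ) < ((p.rotate i).take k).count true := by
      exact_mod_cast this
    linarith
  · intro h k hk
    rw [Finset.mem_Icc] at hk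
    have := h k hk.1 hk.2
    have hct := count_take p hL i k hk.2
    have : (((p.rotate i).take k).count false : ℤ) < ((p.rotate i).take k).count true := by
      linarith
    exact_mod_cast this

/-- Discrete intermediate value theorem for ±1-step walks. -/
lemma ivt (c : ℕ → ℤ) (hstep : ∀ t, c (t + 1) = c t + 1 ∨ c (t + 1) = c t - 1) (v : ℤ) :
    ∀ n a, c a ≤ v → v ≤ c (a + n) → ∃ t, a ≤ t ∧ t ≤ a + n ∧ c t = v := by
  intro n
  induction n with
  | zero => intro a h1 h2; exact ⟨a, le_refl _, by omega, le_antisymm h1 (by simpa using h2)⟩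
  | succ n ih =>
    intro a h1 h2
    rcases eq_or_lt_of_le h1 with h | h
    · exact ⟨a, le_refl _, by omega, h⟩
    · have h3 : c (a + 1) ≤ v := by rcases hstep a with h' | h' <;> omega
      obtain ⟨t, ht1, ht2, ht3⟩ := ih (a + 1) h3 (by rwa [show a + 1 + n = a + (n + 1) by omega])
      exact ⟨t, by omega, by omega, ht3⟩

lemma good_iff (c : ℕ → ℤ) (L δ : ℕ) (hδ : 0 < δ)
    (hper : ∀ t, c (t + L) = c t + δ) (i : ℕ) :
    (∀ k, 1 ≤ k → k ≤ L → c i < c (i + k)) ↔ (∀ t, i < t → c i < c t) := by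
  have hL0 : 0 < L := by
    rcases Nat.eq_zero_or_pos L with h | h
    · exfalso
      have h2 := hper 0
      rw [h] at h2
      simp at h2
      omega
    · exact h
  constructor
  · intro h t
    induction t using Nat.strong_induction_on with
    | _ t ih =>
      intro ht
      by_cases h2 : t ≤ i + L
      · have := h (t - i) (by omega) (by omega)
        rwa [show i + (t - i) = t by omega] at this
      ·
        have ht2 : i < t - L := by omega
        have hlt := ih (t - L) (by omega) ht2
        have h3 := hper (t - L)
        rw [show t - L + L = t by omega] at h3
        have hδ' : (0 : ℤ) < δ := by exact_mod_cast hδ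
        linarith
  · intro h k h1 _; exact h (i + k) (by omega)

open Classical in
/-- Key counting lemma (cycle lemma). -/
lemma key_count (c : ℕ → ℤ) (L δ : ℕ) (hL : 0 < L) (hδ : 0 < δ)
    (hstep : ∀ t, c (t + 1) = c t + 1 ∨ c (t + 1) = c t - 1)
    (hper : ∀ t, c (t + L) = c t + δ) :
    ((Finset.range L).filter (fun i => ∀ t, i < t → c i < c t)).card = δ := by
  classical
  -- decomposition c t = c (t % L) + (t / L) * δ
  have hperk : ∀ k s, c (s + k * L) = c s + k * δ := by
    intro k
    induction k with
    | zero => simp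
    | succ k ih =>
      intro s
      have : s + (k + 1) * L = (s + k * L) + L := by ring
      rw [this, hper, ih]
      push_cast; ring
  have hdecomp : ∀ t, c t = c (t % L) + ((t / L : ℕ) : ℤ) * δ := by
    intro t
    conv_lhs => rw [← Nat.mod_add_div t L]
    rw [show t % L + L * (t / L) = t % L + (t / L) * L by ring]
    exact hperk (t / L) (t % L)
  -- the minimum B of c over one period, which is a global minimum
  have hne : ((Finset.range L).image c).Nonempty :=
    (Finset.nonempty_range_iff.mpr (by omega)).image c
  set B : ℤ := ((Finset.range L).image c).min' hne with hB
  obtain ⟨s0, hs0L, hs0⟩ : ∃ s0, s0 < L ∧ c s0 = B := by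
    obtain ⟨s0, hs0L, hs0⟩ := Finset.mem_image.mp (((Finset.range L).image c).min'_mem hne)
    exact ⟨s0, Finset.mem_range.mp hs0L, hs0⟩
  have hBle : ∀ t, B ≤ c t := by
    intro t
    have h1 : B ≤ c (t % L) :=
      Finset.min'_le _ _ (Finset.mem_image.mpr ⟨t % L, Finset.mem_range.mpr (Nat.mod_lt _ hL), rfl⟩)
    have h2 : (0 : ℤ) ≤ ((t / L : ℕ) : ℤ) * δ := by positivity
    have := hdecomp t
    linarith
  -- eventually the walk stays above any given value
  have hbig : ∀ v : ℤ, ∀ t : ℕ, (v - B + 1).toNat * L ≤ t → v < c t := by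
    intro v t ht
    rcases lt_or_ge v B with h | h
    · exact h.trans_le (hBle t)
    · have h1 : (v - B + 1).toNat ≤ t / L := (Nat.le_div_iff_mul_le hL).mpr ht
      have h2 : ((v - B + 1).toNat : ℤ) = v - B + 1 := Int.toNat_of_nonneg (by omega)
      have h3 : v - B + 1 ≤ ((t / L : ℕ) : ℤ) := by rw [← h2]; exact_mod_cast h1
      have h4 : (1 : ℤ) ≤ δ := by exact_mod_cast hδ
      have h0 : (0 : ℤ) ≤ ((t / L : ℕ) : ℤ) := by positivity
      have h5 : v - B + 1 ≤ ((t / L : ℕ) : ℤ) * δ := by nlinarith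
      have h6 := hdecomp t
      have h7 := hBle (t % L)
      linarith
  -- every value ≥ B is attained
  have hhit : ∀ v : ℤ, B ≤ v → ∃ t, c t = v := by
    intro v hv
    have h1 : c s0 ≤ v := by rw [hs0]; exact hv
    have h2 : v ≤ c (s0 + (v - B + 1).toNat * L) :=
      le_of_lt (hbig v _ (by omega))
    obtain ⟨t, _, _, ht⟩ := ivt c hstep v _ s0 h1 h2
    exact ⟨t, ht⟩
  -- last hit of a value v
  set g : ℤ → ℕ := fun v => Nat.findGreatest (fun t => c t = v) ((v - B + 1).toNat * L) with hg
  have hgspec : ∀ v : ℤ, B ≤ v → c (g v) = v := by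
    intro v hv
    obtain ⟨t, ht⟩ := hhit v hv
    have htlt : t < (v - B + 1).toNat * L := by
      by_contra hc
      exact absurd ht (ne_of_gt (hbig v t (by omega)))
    simp only [hg]
    exact Nat.findGreatest_spec (P := fun t => c t = v) (le_of_lt htlt) ht
  have hglast : ∀ v : ℤ, ∀ t, g v < t → c t ≠ v := by
    intro v t hgt
    rcases lt_or_ge t ((v - B + 1).toNat * L + 1) with h | h
    · simp only [hg] at hgt
      exact Nat.findGreatest_is_greatest hgt (by omega)
    · exact ne_of_gt (hbig v t (by omega))
  have hggood : ∀ v : ℤ, B ≤ v → ∀ t, g v < t → c (g v) < c t := by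
    intro v hv t hgt
    rw [hgspec v hv]
    by_contra hc
    push_neg at hc
    have h2 : v ≤ c (t + (v - B + 1).toNat * L) := le_of_lt (hbig v _ (by omega))
    obtain ⟨t', ht'1, _, ht'3⟩ := ivt c hstep v _ t hc h2
    exact hglast v t' (by omega) ht'3
  have hgL : ∀ v : ℤ, B ≤ v → v < B + δ → g v < L := by
    intro v hv hvu
    by_contra hc
    push_neg at hc
    have h1 := hper (g v - L)
    rw [show g v - L + L = g v by omega] at h1
    have h2 := hgspec v hv
    have h3 := hBle (g v - L)
    have hδ' : (0 : ℤ) ≤ δ := by positivity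
    linarith
  -- bijection between good positions in [0,L) and values in [B, B+δ)
  have hcard : ((Finset.range L).filter (fun i => ∀ t, i < t → c i < c t)).card
      = (Finset.Ico B (B + δ)).card := by
    apply Finset.card_bij' (fun i _ => c i) (fun v _ => g v)
    · intro i hi
      rw [Finset.mem_filter, Finset.mem_range] at hi
      obtain ⟨hiL, hgood⟩ := hi
      rw [Finset.mem_Ico]
      refine ⟨hBle i, ?_⟩
      rcases le_or_gt s0 i with h | h
      · have := hgood (s0 + L) (by omega)
        rw [hper, hs0] at this
        linarith
      · have := hgood s0 h
        rw [hs0] at this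
        have hδ' : (0 : ℤ) ≤ δ := by positivity
        linarith
    · intro v hv
      rw [Finset.mem_Ico] at hv
      rw [Finset.mem_filter, Finset.mem_range]
      exact ⟨hgL v hv.1 hv.2, hggood v hv.1⟩
    · intro i hi
      rw [Finset.mem_filter, Finset.mem_range] at hi
      obtain ⟨hiL, hgood⟩ := hi
      have h1 : i ≤ g (c i) := by
        by_contra hc
        push_neg at hc
        exact hglast (c i) i hc rfl
      rcases eq_or_lt_of_le h1 with h | h
      · exact h.symm
      · have h2 := hgood (g (c i)) h
        rw [hgspec (c i) (hBle i)] at h2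
        exact absurd h2 (lt_irrefl _)
    · intro v hv
      rw [Finset.mem_Ico] at hv
      exact hgspec v hv.1
  rw [hcard, Int.card_Ico]
  simp


/-- Cycle lemma ratio: for a sequence of `m` open and `n` close parentheses with
`m > n`, among the distinct cyclic permutations the proportion of dominating
sequences is `(m-n)/(m+n)`. -/
theorem cycle_lemma_ratio (p : List Bool) (m n : ℕ)
    (hm : p.count true = m) (hn : p.count false = n) (hmn : n < m) :
    (((Finset.range p.length).image (fun i => p.rotate i)).filter Dominating).card *
        (m + n) =
      (m - n) * ((Finset.range p.length).image (fun i => p.rotate i)).card := by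
  classical
  set L := p.length with hLdef
  have hL : 0 < L := by
    have h1 : m ≤ L := hm ▸ (List.count_le_length : p.count true ≤ p.length)
    omega
  have hLmn : L = m + n := by
    have : ∀ l : List Bool, l.count true + l.count false = l.length := by
      intro l
      induction l with
      | nil => simp
      | cons a l ih => cases a <;> simp [List.count_cons] <;> omega
    have := this p
    omega
  set δ : ℕ := m - n with hδdef
  have hδ : 0 < δ := by omega
  have hcast : ((p.count true : ℤ) - p.count false) = (δ : ℤ) := by
    rw [hm, hn, hδdef]
    push_cast [Nat.cast_sub hmn.le]
    ring
  have hper : ∀ t, psum p (t + L) = psum p t + (δ : ℤ) := by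
    intro t
    rw [hLdef, psum_per, hcast]
  -- positions count
  have hpos : ((Finset.range L).filter (fun i => Dominating (p.rotate i))).card = δ := by
    have heq : (Finset.range L).filter (fun i => Dominating (p.rotate i))
        = (Finset.range L).filter (fun i => ∀ t, i < t → psum p i < psum p t) := by
      apply Finset.filter_congr
      intro i _
      rw [dom_iff p hL i, good_iff (psum p) L δ hδ hper i]
    rw [heq]
    exact key_count (psum p) L δ hL hδ (psum_pm p) hper
  -- fibers of the rotation map all have the same cardinality
  set I := (Finset.range L).image (fun i => p.rotate i) with hI
  set k := ((Finset.range L).filter (fun i => p.rotate i = p)).card with hk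
  have hrotL : p.rotate L = p := List.rotate_length p
  have hfiber : ∀ q ∈ I, ((Finset.range L).filter (fun i => p.rotate i = q)).card = k := by
    intro q hq
    obtain ⟨i0, hi0, hq0⟩ := Finset.mem_image.mp hq
    rw [Finset.mem_range] at hi0
    rw [hk]
    apply Finset.card_bij' (fun i _ => (i + (L - i0)) % L) (fun j _ => (j + i0) % L)
    · intro i hi
      rw [Finset.mem_filter, Finset.mem_range] at hi ⊢
      obtain ⟨hiL, hiq⟩ := hi
      refine ⟨Nat.mod_lt _ hL, ?_⟩
      rw [hLdef, List.rotate_mod, ← List.rotate_rotate, hiq, ← hq0,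
        List.rotate_rotate, show i0 + (p.length - i0) = p.length from by omega,
        List.rotate_length]
    · intro j hj
      rw [Finset.mem_filter, Finset.mem_range] at hj ⊢
      obtain ⟨hjL, hjp⟩ := hj
      refine ⟨Nat.mod_lt _ hL, ?_⟩
      rw [hLdef, List.rotate_mod, ← List.rotate_rotate, hjp, hq0]
    · intro i hi
      rw [Finset.mem_filter, Finset.mem_range] at hi
      rw [Nat.mod_add_mod, show i + (L - i0) + i0 = i + L by omega, Nat.add_mod_right,
        Nat.mod_eq_of_lt hi.1]
    · intro j hj
      rw [Finset.mem_filter, Finset.mem_range] at hj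
      rw [Nat.mod_add_mod, show j + i0 + (L - i0) = j + L by omega, Nat.add_mod_right,
        Nat.mod_eq_of_lt hj.1]
  -- total count: L = I.card * k
  have htot : L = I.card * k := by
    have h1 := Finset.card_eq_sum_card_fiberwise
      (f := fun i => p.rotate i) (s := Finset.range L) (t := I)
      (fun x hx => Finset.mem_image_of_mem _ hx)
    rw [Finset.card_range] at h1
    rw [h1, Finset.sum_congr rfl hfiber, Finset.sum_const, smul_eq_mul]
  -- good count: δ = F.card * k
  have hgoodtot : δ = (I.filter Dominating).card * k := by
    have h1 := Finset.card_eq_sum_card_fiberwise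
      (f := fun i => p.rotate i)
      (s := (Finset.range L).filter (fun i => Dominating (p.rotate i)))
      (t := I.filter Dominating)
      (fun x hx => by
        rw [Finset.mem_coe, Finset.mem_filter] at hx ⊢
        exact ⟨Finset.mem_image_of_mem _ hx.1, hx.2⟩)
    rw [hpos] at h1
    rw [h1]
    rw [Finset.sum_congr rfl (fun q hq => ?_), Finset.sum_const, smul_eq_mul]
    have hqI : q ∈ I := Finset.mem_of_mem_filter q hq
    have hqD : Dominating q := (Finset.mem_filter.mp hq).2
    rw [← hfiber q hqI]
    congr 1
    ext i
    simp only [Finset.mem_filter, Finset.mem_range]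
    constructor
    · rintro ⟨⟨h1, _⟩, h3⟩
      exact ⟨h1, h3⟩
    · rintro ⟨h1, h3⟩
      exact ⟨⟨h1, h3 ▸ hqD⟩, h3⟩
  calc (I.filter Dominating).card * (m + n)
      = (I.filter Dominating).card * L := by rw [hLmn]
    _ = (I.filter Dominating).card * (I.card * k) := by rw [htot]
    _ = ((I.filter Dominating).card * k) * I.card := by ring
    _ = δ * I.card := by rw [hgoodtot]
    _ = (m - n) * I.card := by rw [hδdef]
end
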